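/- arXiv:1106.6298 — 6 statements merged into one kernel-verified Lean document; each statement's English description precedes it below -/
import Mathlib

section
/- If m and n are distinct positive integers such that m/n is not of the form p^e for any prime p and nonzero integer e, then the ideal of ℤ[q] generated by Φ_n(q) and Φ_m(q) is the unit ideal (1). -/
open Polynomial

/-- If distinct positive integers `m, n` do not differ multiplicatively by a nonzero
power of a prime, then `(Φ_n) + (Φ_m) = (1)` in `ℤ[q]`. -/
theorem stmt2 (m n : ℕ) (hm : 0 < m) (hn : 0 < n) (hmn : m ≠ n)
    (h : ∀ p : ℕ, p.Prime → ∀ e : ℤ, e ≠ 0 → (m : ℚ) / n ≠ (p : ℚ) ^ e) :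
    Ideal.span {cyclotomic n ℤ, cyclotomic m ℤ} = ⊤ := by
  by_contra hI
  obtain ⟨M, hMmax, hIM⟩ := Ideal.exists_le_maximal _ hI
  haveI := hMmax
  letI F := ℤ[X] ⧸ M
  letI : Field F := Ideal.Quotient.field M
  let π : ℤ[X] →+* F := Ideal.Quotient.mk M
  let μ : F := π X
  have key : ∀ k : ℕ, cyclotomic k ℤ ∈ ({cyclotomic n ℤ, cyclotomic m ℤ} : Set ℤ[X]) →
      IsRoot (cyclotomic k F) μ := by
    intro k hk
    have hmem : cyclotomic k ℤ ∈ M := hIM (Ideal.subset_span hk)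
    have h0 : π (cyclotomic k ℤ) = 0 := Ideal.Quotient.eq_zero_iff_mem.2 hmem
    have : π (cyclotomic k ℤ) = aeval μ (cyclotomic k ℤ) := by
      conv_lhs => rw [← aeval_X_left_apply (cyclotomic k ℤ)]
      exact (aeval_algHom_apply (Ideal.Quotient.mkₐ ℤ M) X (cyclotomic k ℤ)).symm
    rw [this, aeval_def, eval₂_eq_eval_map, map_cyclotomic] at h0
    exact h0
  have hrn : IsRoot (cyclotomic n F) μ := key n (by simp)
  have hrm : IsRoot (cyclotomic m F) μ := key m (by simp)
  obtain ⟨c, hc⟩ := CharP.exists F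
  haveI := hc
  rcases CharP.char_is_prime_or_zero F c with hp | rfl
  · -- characteristic p
    haveI : Fact (Nat.Prime c) := ⟨hp⟩
    set a := n.factorization c with ha
    set b := m.factorization c with hb
    set n' := n / c ^ a with hn'
    set m' := m / c ^ b with hm'
    have hne : c ^ a * n' = n := Nat.ordProj_mul_ordCompl_eq_self n c
    have hme : c ^ b * m' = m := Nat.ordProj_mul_ordCompl_eq_self m c
    have hcn' : ¬ c ∣ n' := Nat.not_dvd_ordCompl hp hn.ne'
    have hcm' : ¬ c ∣ m' := Nat.not_dvd_ordCompl hp hm.ne'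
    haveI : NeZero ((n' : F)) := NeZero.of_not_dvd F hcn'
    haveI : NeZero ((m' : F)) := NeZero.of_not_dvd F hcm'
    rw [← hne] at hrn
    rw [← hme] at hrm
    have h1 : IsPrimitiveRoot μ n' := isRoot_cyclotomic_prime_pow_mul_iff_of_charP.1 hrn
    have h2 : IsPrimitiveRoot μ m' := isRoot_cyclotomic_prime_pow_mul_iff_of_charP.1 hrm
    have hnm' : n' = m' := h1.unique h2
    have hab : a ≠ b := by
      intro hEq
      apply hmn
      rw [← hme, ← hne, hnm', hEq]
    have hn'0 : n' ≠ 0 := by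
      intro h0; rw [h0, mul_zero] at hne; omega
    have hc0 : (c : ℚ) ≠ 0 := Nat.cast_ne_zero.2 hp.pos.ne'
    refine h c hp ((b : ℤ) - a) (sub_ne_zero.2 (by exact_mod_cast hab.symm)) ?_
    have : (m : ℚ) / n = (c : ℚ) ^ (b : ℕ) / (c : ℚ) ^ (a : ℕ) := by
      rw [← hne, ← hme, hnm']
      push_cast
      rw [mul_div_mul_right _ _ (by exact_mod_cast (Nat.pos_of_ne_zero (hnm' ▸ hn'0)).ne' : (m' : ℚ) ≠ 0)]
    rw [this, ← zpow_natCast (c : ℚ) b, ← zpow_natCast (c : ℚ) a, ← zpow_sub₀ hc0]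
  · -- characteristic zero
    haveI : CharZero F := CharP.charP_to_charZero F
    obtain ⟨A, B, hAB⟩ := cyclotomic.isCoprime_rat (show n ≠ m from hmn.symm)
    let g : ℚ[X] →+* F := eval₂RingHom (Rat.castHom F) μ
    have hgn : g (cyclotomic n ℚ) = 0 := by
      show eval₂ (Rat.castHom F) μ (cyclotomic n ℚ) = 0
      rw [eval₂_eq_eval_map, map_cyclotomic]; exact hrn
    have hgm : g (cyclotomic m ℚ) = 0 := by
      show eval₂ (Rat.castHom F) μ (cyclotomic m ℚ) = 0
      rw [eval₂_eq_eval_map, map_cyclotomic]; exact hrm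
    have := congrArg g hAB
    rw [map_add, map_mul, map_mul, hgn, hgm, mul_zero, mul_zero, add_zero, map_one] at this
    exact zero_ne_one this
end

section
/- Let ξ be a primitive root of unity of odd order r, let b be a positive integer, set c = gcd(r,b), b₁ = b/c, r₁ = r/c. Then the generalized Gauss sum satisfies γ_b(ξ) = c·γ_{b₁}(ξ^c), where γ_b(ξ) = Σ_{0<n<2r, n odd} ξ^{b(n²-1)/4}. -/
open Finset

lemma aux_period_sum (p k : ℕ) (f : ℕ → ℂ) (hf : ∀ x, f (x + p) = f x) :
    ∑ i ∈ range (p * k), f i = k * ∑ i ∈ range p, f i := by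
  induction k with
  | zero => simp
  | succ k ih =>
    have hshift : ∀ x, f (x + p * k) = f x := by
      clear ih
      intro x
      induction k with
      | zero => simp
      | succ k ih2 =>
        have h : x + p * (k + 1) = (x + p * k) + p := by ring
        rw [h, hf, ih2]
    have h : p * (k + 1) = p * k + p := by ring
    rw [h, Finset.sum_range_add, ih]
    have h2 : ∑ i ∈ range p, f (p * k + i) = ∑ i ∈ range p, f i := by
      refine Finset.sum_congr rfl fun i _ => ?_
      rw [show p * k + i = i + p * k by ring, hshift]
    rw [h2]
    push_cast
    ring

/-- For `ξ` a primitive root of unity of odd order `r`, `b > 0`, `c = gcd(r,b)`,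
`b₁ = b/c`, `r₁ = r/c`, the Gauss sum `γ_b(ξ) = Σ_{0<n<2r, n odd} ξ^{b(n²-1)/4}`
satisfies `γ_b(ξ) = c · γ_{b₁}(ξ^c)`. -/
theorem stmt5 (r b : ℕ) (hr : Odd r) (hr0 : 0 < r) (hb : 0 < b)
    (ξ : ℂ) (hξ : IsPrimitiveRoot ξ r) :
    (∑ n ∈ (range (2 * r)).filter (fun n => Odd n), ξ ^ (b * (n ^ 2 - 1) / 4))
      = (Nat.gcd r b) *
        ∑ n ∈ (range (2 * (r / Nat.gcd r b))).filter (fun n => Odd n),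
          (ξ ^ Nat.gcd r b) ^ ((b / Nat.gcd r b) * (n ^ 2 - 1) / 4) := by
  set c := Nat.gcd r b with hc
  have hc0 : 0 < c := Nat.gcd_pos_of_pos_left _ hr0
  obtain ⟨r₁, hr₁⟩ : c ∣ r := Nat.gcd_dvd_left r b
  obtain ⟨b₁, hb₁⟩ : c ∣ b := Nat.gcd_dvd_right r b
  have hrc : r / c = r₁ := by rw [hr₁, Nat.mul_div_cancel_left _ hc0]
  have hbc : b / c = b₁ := by rw [hb₁, Nat.mul_div_cancel_left _ hc0]
  have hξr : ξ ^ r = 1 := hξ.pow_eq_one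
  -- basic square computation
  have hsq : ∀ m : ℕ, (2 * m + 1) ^ 2 - 1 = 4 * (m * (m + 1)) := by
    intro m
    have : (2 * m + 1) ^ 2 = 4 * (m * (m + 1)) + 1 := by ring
    omega
  have hdiv : ∀ a m : ℕ, a * ((2 * m + 1) ^ 2 - 1) / 4 = a * (m * (m + 1)) := by
    intro a m
    rw [hsq, show a * (4 * (m * (m + 1))) = a * (m * (m + 1)) * 4 by ring,
      Nat.mul_div_cancel _ (by norm_num)]
  set g : ℕ → ℂ := fun n => if Odd n then ξ ^ (b * (n ^ 2 - 1) / 4) else 0 with hg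
  -- rewrite both filtered sums as full sums of g
  rw [Finset.sum_filter, Finset.sum_filter, hrc, hbc]
  have hterm : ∀ n : ℕ,
      (if Odd n then (ξ ^ c) ^ (b₁ * (n ^ 2 - 1) / 4) else 0) = g n := by
    intro n
    by_cases hn : Odd n
    · obtain ⟨m, rfl⟩ := hn
      simp only [hg, if_pos (⟨m, rfl⟩ : Odd (2 * m + 1))]
      rw [hdiv, hdiv, ← pow_mul]
      congr 1
      rw [hb₁]; ring
    · simp [hg, hn]
  have hper : ∀ x, g (x + 2 * r₁) = g x := by
    intro x
    by_cases hx : Odd x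
    · obtain ⟨m, rfl⟩ := hx
      have h1 : 2 * m + 1 + 2 * r₁ = 2 * (m + r₁) + 1 := by ring
      simp only [hg, h1]
      rw [if_pos (show Odd (2 * (m + r₁) + 1) from ⟨m + r₁, rfl⟩),
        if_pos (show Odd (2 * m + 1) from ⟨m, rfl⟩), hdiv, hdiv]
      have h2 : b * ((m + r₁) * (m + r₁ + 1)) =
          b * (m * (m + 1)) + r * (b₁ * (r₁ + 2 * m + 1)) := by
        rw [hr₁, hb₁]; ring
      rw [h2, pow_add, pow_mul ξ r, hξr, one_pow, mul_one]
    · have hx' : ¬ Odd (x + 2 * r₁) := by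
        rw [Nat.odd_add]
        simp [hx, even_two_mul r₁]
      simp [hg, hx, hx']
  have hsplit : 2 * r = 2 * r₁ * c := by rw [hr₁]; ring
  calc ∑ n ∈ range (2 * r), g n
      = ∑ n ∈ range (2 * r₁ * c), g n := by rw [hsplit]
    _ = c * ∑ n ∈ range (2 * r₁), g n := aux_period_sum _ _ _ hper
    _ = c * ∑ n ∈ range (2 * r₁),
          (if Odd n then (ξ ^ c) ^ (b₁ * (n ^ 2 - 1) / 4) else 0) := by
        rw [Finset.sum_congr rfl fun n _ => (hterm n)]
end

section
/- Let ξ be a primitive root of unity of odd order r, b a positive integer, c = gcd(r,b), b₁ = b/c, r₁ = r/c, and let a be an integer. Then Σ_{0<n<2r, n odd} ξ^{b(n²-1)/4}·ξ^{an} equals 0 if c does not divide a, and equals ξ^{-c·a₁²·b₁*}·γ_b(ξ) if a = c·a₁, where b₁* is any integer with b₁·b₁* ≡ 1 (mod r₁). -/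
open Finset

/-- Laplace transform computation: for `ξ` a primitive root of unity of odd order `r`,
`b > 0`, `c = gcd(r,b)`, `b₁ = b/c`, `r₁ = r/c` and `a ∈ ℤ`, the twisted Gauss sum
`Σ_{0<n<2r, n odd} ξ^{b(n²-1)/4}·ξ^{an}` vanishes if `c ∤ a`, and equals
`ξ^{-c·a₁²·b₁*}·γ_b(ξ)` if `a = c·a₁`, where `b₁·b₁* ≡ 1 (mod r₁)`. -/
theorem stmt6 (r b : ℕ) (hr : Odd r) (hr0 : 0 < r) (hb : 0 < b)
    (ξ : ℂ) (hξ : IsPrimitiveRoot ξ r) (a : ℤ) :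
    ((¬ ((Nat.gcd r b : ℤ) ∣ a)) →
      (∑ n ∈ (range (2 * r)).filter (fun n => Odd n),
          ξ ^ (b * (n ^ 2 - 1) / 4) * ξ ^ (a * n)) = 0) ∧
    (∀ a₁ bs : ℤ, a = (Nat.gcd r b : ℤ) * a₁ →
      ((b / Nat.gcd r b : ℕ) : ℤ) * bs ≡ 1 [ZMOD ((r / Nat.gcd r b : ℕ) : ℤ)] →
      (∑ n ∈ (range (2 * r)).filter (fun n => Odd n),
          ξ ^ (b * (n ^ 2 - 1) / 4) * ξ ^ (a * n))
        = ξ ^ (-(Nat.gcd r b : ℤ) * a₁ ^ 2 * bs) *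
          ∑ n ∈ (range (2 * r)).filter (fun n => Odd n), ξ ^ (b * (n ^ 2 - 1) / 4)) := by
  classical
  haveI : NeZero r := ⟨hr0.ne'⟩
  have hξ0 : ξ ≠ 0 := hξ.ne_zero hr0.ne'
  have hξr : ξ ^ ((r : ℕ) : ℤ) = 1 := by
    rw [zpow_natCast]; exact hξ.pow_eq_one
  have key : ∀ m m' : ℤ, ((m : ZMod r) = (m' : ZMod r)) → ξ ^ m = ξ ^ m' := by
    intro m m' h
    obtain ⟨q, hq⟩ := ((ZMod.intCast_eq_intCast_iff m m' r).mp h).dvd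
    have hm : m' = m + (r : ℤ) * q := by linarith
    rw [hm, zpow_add₀ hξ0, zpow_mul, hξr, one_zpow, mul_one]
  set c := Nat.gcd r b with hcdef
  have hcr : c ∣ r := Nat.gcd_dvd_left r b
  have hcb : c ∣ b := Nat.gcd_dvd_right r b
  have hc0 : 0 < c := Nat.gcd_pos_of_pos_left b hr0
  set r1 := r / c with hr1def
  set b1 := b / c with hb1def
  have hrc : c * r1 = r := Nat.mul_div_cancel' hcr
  have hbc : c * b1 = b := Nat.mul_div_cancel' hcb
  have hr10 : 0 < r1 := Nat.div_pos (Nat.le_of_dvd hr0 hcr) hc0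
  have hrZ : (r : ℤ) = (c : ℤ) * (r1 : ℤ) := by exact_mod_cast hrc.symm
  have hbZ : (b : ℤ) = (c : ℤ) * (b1 : ℤ) := by exact_mod_cast hbc.symm
  -- rewrite the sums over odd n < 2r as sums over ZMod r
  have himg : (range (2 * r)).filter (fun n => Odd n) = (range r).image (fun k => 2 * k + 1) := by
    ext n
    simp only [mem_filter, mem_range, mem_image, Nat.odd_iff]
    constructor
    · rintro ⟨h1, h2⟩
      exact ⟨n / 2, by omega, by omega⟩
    · rintro ⟨k, hk, rfl⟩
      omega
  have hinj : ∀ x ∈ range r, ∀ y ∈ range r, 2 * x + 1 = 2 * y + 1 → x = y := by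
    intro x _ y _ h; omega
  have hterm : ∀ (w : ℤ) (k : ℕ),
      ξ ^ (b * ((2 * k + 1) ^ 2 - 1) / 4) * ξ ^ (w * ((2 * k + 1 : ℕ) : ℤ)) =
      ξ ^ ((b : ℤ) * ((k : ℤ) ^ 2 + (k : ℤ)) + w * (2 * (k : ℤ) + 1)) := by
    intro w k
    have h4 : (2 * k + 1) ^ 2 - 1 = 4 * (k ^ 2 + k) := by
      have : (2 * k + 1) ^ 2 = 4 * (k ^ 2 + k) + 1 := by ring
      omega
    have e1 : b * ((2 * k + 1) ^ 2 - 1) / 4 = b * (k ^ 2 + k) := by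
      rw [h4, show b * (4 * (k ^ 2 + k)) = 4 * (b * (k ^ 2 + k)) by ring]
      exact Nat.mul_div_cancel_left _ (by norm_num)
    have hcast : ((b * (k ^ 2 + k) : ℕ) : ℤ) + w * ((2 * k + 1 : ℕ) : ℤ) =
        (b : ℤ) * ((k : ℤ) ^ 2 + (k : ℤ)) + w * (2 * (k : ℤ) + 1) := by
      push_cast; ring
    rw [e1, ← zpow_natCast ξ (b * (k ^ 2 + k)), ← zpow_add₀ hξ0, hcast]
  have hS : ∀ w : ℤ, (∑ n ∈ (range (2 * r)).filter (fun n => Odd n),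
        ξ ^ (b * (n ^ 2 - 1) / 4) * ξ ^ (w * (n : ℤ))) =
      ∑ x : ZMod r, ξ ^ ((b : ℤ) * ((x.val : ℤ) ^ 2 + (x.val : ℤ)) + w * (2 * (x.val : ℤ) + 1)) := by
    intro w
    rw [himg, sum_image hinj]
    refine Finset.sum_nbij' (fun k => (k : ZMod r)) (fun x => x.val) ?_ ?_ ?_ ?_ ?_
    · intro k _; exact mem_univ _
    · intro x _; exact mem_range.mpr (ZMod.val_lt x)
    · intro k hk; exact ZMod.val_cast_of_lt (mem_range.mp hk)
    · intro x _; exact ZMod.natCast_rightInverse x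
    · intro k hk
      rw [hterm w k, ZMod.val_cast_of_lt (mem_range.mp hk)]
  have hγ : (∑ n ∈ (range (2 * r)).filter (fun n => Odd n), ξ ^ (b * (n ^ 2 - 1) / 4)) =
      ∑ x : ZMod r, ξ ^ ((b : ℤ) * ((x.val : ℤ) ^ 2 + (x.val : ℤ))) := by
    have h0 := hS 0
    simpa using h0
  have hshift : ∀ (t : ZMod r) (F : ZMod r → ℂ),
      ∑ x : ZMod r, F (x + t) = ∑ x : ZMod r, F x :=
    fun t F => Fintype.sum_equiv (Equiv.addRight t) _ _ (fun x => rfl)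
  constructor
  · -- Part 1 : c ∤ a, shift by r1
    intro hnd
    rw [hS a]
    set F : ZMod r → ℂ := fun x =>
      ξ ^ ((b : ℤ) * ((x.val : ℤ) ^ 2 + (x.val : ℤ)) + a * (2 * (x.val : ℤ) + 1)) with hF
    have hbr1 : ((b : ℕ) : ZMod r) * ((r1 : ℕ) : ZMod r) = 0 := by
      have : ((b * r1 : ℕ) : ZMod r) = 0 := by
        rw [ZMod.natCast_eq_zero_iff]
        exact ⟨b1, by rw [← hbc, ← hrc]; ring⟩
      push_cast at this
      exact this
    have hstep : ∀ x : ZMod r,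
        F (x + ((r1 : ℕ) : ZMod r)) = ξ ^ (2 * a * (r1 : ℤ)) * F x := by
      intro x
      set u := (x + ((r1 : ℕ) : ZMod r)).val with hu
      set v := x.val with hv
      have hu' : ((u : ℕ) : ZMod r) = ((v : ℕ) : ZMod r) + ((r1 : ℕ) : ZMod r) := by
        rw [hu, hv, ZMod.natCast_rightInverse _, ZMod.natCast_rightInverse _]
      have hkey : ξ ^ ((b : ℤ) * ((u : ℤ) ^ 2 + (u : ℤ)) + a * (2 * (u : ℤ) + 1)) =
          ξ ^ (2 * a * (r1 : ℤ) + ((b : ℤ) * ((v : ℤ) ^ 2 + (v : ℤ)) + a * (2 * (v : ℤ) + 1))) := by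
        apply key
        push_cast
        rw [hu']
        ring_nf
        linear_combination (2 * (v : ZMod r) + (r1 : ZMod r) + 1) * hbr1
      show ξ ^ ((b : ℤ) * ((u : ℤ) ^ 2 + (u : ℤ)) + a * (2 * (u : ℤ) + 1)) = _
      rw [hkey, zpow_add₀ hξ0]
    have h1 : (∑ x : ZMod r, F x) = ξ ^ (2 * a * (r1 : ℤ)) * ∑ x : ZMod r, F x := by
      conv_lhs => rw [← hshift ((r1 : ℕ) : ZMod r) F]
      rw [Finset.sum_congr rfl (fun x _ => hstep x), ← mul_sum]
    have hne : ξ ^ (2 * a * (r1 : ℤ)) ≠ 1 := by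
      intro h1'
      have hd : (r : ℤ) ∣ 2 * a * (r1 : ℤ) := (hξ.zpow_eq_one_iff_dvd _).mp h1'
      rw [hrZ] at hd
      have hd2 : (c : ℤ) ∣ 2 * a := by
        have hr1ne : ((r1 : ℕ) : ℤ) ≠ 0 := by exact_mod_cast hr10.ne'
        rw [show (2 : ℤ) * a * (r1 : ℤ) = (2 * a) * (r1 : ℤ) by ring] at hd
        exact (mul_dvd_mul_iff_right hr1ne).mp hd
      have hcodd : Odd c := by
        rcases Nat.even_or_odd c with hce | hco
        · exfalso
          apply Nat.not_even_iff_odd.mpr hr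
          rw [← hrc]; exact hce.mul_right r1
        · exact hco
      have hcop : IsCoprime ((c : ℕ) : ℤ) ((2 : ℕ) : ℤ) :=
        Nat.isCoprime_iff_coprime.mpr (Nat.coprime_two_right.mpr hcodd)
      apply hnd
      exact (by exact_mod_cast hcop : IsCoprime (c : ℤ) (2 : ℤ)).dvd_of_dvd_mul_left hd2
    have hzero : (1 - ξ ^ (2 * a * (r1 : ℤ))) * ∑ x : ZMod r, F x = 0 := by
      linear_combination h1
    rcases mul_eq_zero.mp hzero with h | h
    · exact absurd (by linear_combination -h : ξ ^ (2 * a * (r1 : ℤ)) = 1) hne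
    · exact h
  · -- Part 2 : a = c * a₁
    intro a₁ bs ha hbs
    rw [hS a, hγ]
    obtain ⟨q, hq⟩ := (Int.ModEq.dvd hbs.symm)
    -- hq : (b1 : ℤ) * bs - 1 = (r1 : ℤ) * q
    have hq' : (b1 : ℤ) * bs - 1 = (r1 : ℤ) * q := by linarith [hq]
    set t : ℤ := a₁ * bs with ht
    have hdvd : (r : ℤ) ∣ (b : ℤ) * t - a := by
      refine ⟨a₁ * q, ?_⟩
      rw [hbZ, hrZ, ha, ht]
      linear_combination ((c : ℤ) * a₁) * hq'
    have hbtz : ((b : ℕ) : ZMod r) * ((t : ℤ) : ZMod r) = ((a : ℤ) : ZMod r) := by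
      have : (((b : ℤ) * t - a : ℤ) : ZMod r) = 0 := by
        rw [ZMod.intCast_zmod_eq_zero_iff_dvd]; exact hdvd
      push_cast at this
      linear_combination this
    set F : ZMod r → ℂ := fun x =>
      ξ ^ ((b : ℤ) * ((x.val : ℤ) ^ 2 + (x.val : ℤ)) + a * (2 * (x.val : ℤ) + 1)) with hF
    set G : ZMod r → ℂ := fun x =>
      ξ ^ ((b : ℤ) * ((x.val : ℤ) ^ 2 + (x.val : ℤ))) with hG
    have hstep : ∀ x : ZMod r,
        G (x + ((t : ℤ) : ZMod r)) = ξ ^ ((b : ℤ) * t ^ 2) * F x := by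
      intro x
      set u := (x + ((t : ℤ) : ZMod r)).val with hu
      set v := x.val with hv
      have hu' : ((u : ℕ) : ZMod r) = ((v : ℕ) : ZMod r) + ((t : ℤ) : ZMod r) := by
        rw [hu, hv, ZMod.natCast_rightInverse _, ZMod.natCast_rightInverse _]
      have hkey : ξ ^ ((b : ℤ) * ((u : ℤ) ^ 2 + (u : ℤ))) =
          ξ ^ ((b : ℤ) * t ^ 2 +
            ((b : ℤ) * ((v : ℤ) ^ 2 + (v : ℤ)) + a * (2 * (v : ℤ) + 1))) := by
        apply key
        push_cast
        rw [hu']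
        ring_nf
        linear_combination (2 * (v : ZMod r) + 1) * hbtz
      show ξ ^ ((b : ℤ) * ((u : ℤ) ^ 2 + (u : ℤ))) = _
      rw [hkey, zpow_add₀ hξ0]
    have hGF : (∑ x : ZMod r, G x) = ξ ^ ((b : ℤ) * t ^ 2) * ∑ x : ZMod r, F x := by
      conv_lhs => rw [← hshift (((t : ℤ)) : ZMod r) G]
      rw [Finset.sum_congr rfl (fun x _ => hstep x), ← mul_sum]
    rw [hGF, ← mul_assoc, ← zpow_add₀ hξ0]
    have hone : ξ ^ (-(c : ℤ) * a₁ ^ 2 * bs + (b : ℤ) * t ^ 2) = 1 := by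
      rw [show (1 : ℂ) = ξ ^ (0 : ℤ) by rw [zpow_zero]]
      apply key
      rw [Int.cast_zero, ZMod.intCast_zmod_eq_zero_iff_dvd]
      refine ⟨a₁ ^ 2 * bs * q, ?_⟩
      rw [hbZ, hrZ, ht]
      linear_combination ((c : ℤ) * a₁ ^ 2 * bs) * hq'
    rw [hone, one_mul]
end

section
/- The Rogers–Ramanujan identity holds as an identity of formal power series: ∏_{k≥1} 1/((1-q^{5k-4})(1-q^{5k-1})) = Σ_{n≥0} q^{n²}/((1-q)(1-q²)···(1-q^n)). -/
open Finset PowerSeries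

namespace RR

noncomputable section

abbrev R := PowerSeries ℚ

/-- `X^(toNat a)` -/
def xe (a : ℤ) : R := (X : R) ^ a.toNat

lemma xe_add {a b : ℤ} (ha : 0 ≤ a) (hb : 0 ≤ b) : xe (a + b) = xe a * xe b := by
  rw [xe, xe, xe, ← pow_add]
  congr 1
  omega

lemma xe_natCast (n : ℕ) : xe (n : ℤ) = (X : R) ^ n := by
  rw [xe, Int.toNat_natCast]

lemma xe_zero : xe 0 = 1 := by simp [xe]

/-- sign `(-1)^j` -/
def s (j : ℤ) : ℚ := if j % 2 = 0 then 1 else -1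

lemma s_add_one (j : ℤ) : s (j + 1) = - s j := by
  unfold s
  split_ifs with h1 h2 h2 <;> first
  | (exfalso; omega)
  | norm_num

lemma s_sub_one (j : ℤ) : s (j - 1) = - s j := by
  have := s_add_one (j - 1); rw [sub_add_cancel] at this; rw [this]; ring

/-- pentagonal-type exponent `(5j²+j)/2` -/
def EZ (j : ℤ) : ℤ := (5 * j ^ 2 + j) / 2

lemma two_EZ (j : ℤ) : 2 * EZ j = 5 * j ^ 2 + j := by
  rcases Int.even_or_odd j with ⟨m, hm⟩ | ⟨m, hm⟩ <;> subst hm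
  · rw [EZ, show 5 * (m + m) ^ 2 + (m + m) = 2 * (10 * m ^ 2 + m) by ring,
      Int.mul_ediv_cancel_left _ (by norm_num)]
  · rw [EZ, show 5 * (2 * m + 1) ^ 2 + (2 * m + 1) = 2 * (10 * m ^ 2 + 11 * m + 3) by ring,
      Int.mul_ediv_cancel_left _ (by norm_num)]

lemma EZ_nonneg (j : ℤ) : 0 ≤ EZ j := by
  have h := two_EZ j
  rcases le_or_gt 0 j with hj | hj
  · nlinarith
  · nlinarith

lemma EZ_succ (j : ℤ) : 2 * EZ (j + 1) = 2 * EZ j + 10 * j + 6 := by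
  have a := two_EZ j; have b := two_EZ (j + 1); linear_combination b - a

lemma EZ_pred (j : ℤ) : 2 * EZ (j - 1) = 2 * EZ j - 10 * j + 4 := by
  have a := two_EZ j; have b := two_EZ (j - 1); linear_combination b - a

lemma EZ_sq (j : ℤ) : 2 * EZ j ≥ 2 * j ^ 2 := by
  have h := two_EZ j
  rcases le_or_gt 0 j with hj | hj
  · nlinarith
  · nlinarith

/-! ### congruence mod `X^M` -/

def md (M : ℕ) (f g : R) : Prop := (X : R) ^ M ∣ f - g

lemma md_refl {M : ℕ} {f : R} : md M f f := by simp [md]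

lemma md_symm {M : ℕ} {f g : R} (h : md M f g) : md M g f := by
  simpa [md] using (dvd_neg.2 h)

lemma md_trans {M : ℕ} {f g h : R} (h1 : md M f g) (h2 : md M g h) : md M f h := by
  have := dvd_add h1 h2
  simpa [md] using this

lemma md_add {M : ℕ} {f g f' g' : R} (h : md M f g) (h' : md M f' g') :
    md M (f + f') (g + g') := by
  have := dvd_add h h'
  simpa [md, add_sub_add_comm] using this

lemma md_mul {M : ℕ} {f g f' g' : R} (h : md M f g) (h' : md M f' g') :
    md M (f * f') (g * g') := by
  have : f * f' - g * g' = f * (f' - g') + (f - g) * g' := by ring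
  rw [md, this]
  exact dvd_add (Dvd.dvd.mul_left h' f) (Dvd.dvd.mul_right h g')

lemma md_sum {M : ℕ} {ι : Type*} {t : Finset ι} {f g : ι → R}
    (h : ∀ i ∈ t, md M (f i) (g i)) :
    md M (∑ i ∈ t, f i) (∑ i ∈ t, g i) := by
  classical
  induction t using Finset.induction_on with
  | empty => simp [md_refl]
  | insert _ _ hx ih =>
      rw [Finset.sum_insert hx, Finset.sum_insert hx]
      exact md_add (h _ (Finset.mem_insert_self _ _))
        (ih fun i hi => h i (Finset.mem_insert_of_mem hi))

lemma md_smul {M : ℕ} (c : ℚ) {f g : R} (h : md M f g) : md M (c • f) (c • g) := by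
  rw [md, ← smul_sub, PowerSeries.smul_eq_C_mul]
  exact Dvd.dvd.mul_left h _

lemma md_coeff {M : ℕ} {f g : R} (h : md M f g) {i : ℕ} (hi : i < M) :
    coeff i f = coeff i g := by
  have := (X_pow_dvd_iff.1 h) i hi
  rw [map_sub] at this
  linarith

lemma md_mono {M M' : ℕ} (hM : M' ≤ M) {f g : R} (h : md M f g) : md M' f g :=
  dvd_trans (pow_dvd_pow _ hM) h

lemma md_xpow {M a : ℕ} (h : M ≤ a) {f : R} : md M ((X : R) ^ a * f) 0 := by
  rw [md, sub_zero]
  exact Dvd.dvd.mul_right (pow_dvd_pow _ h) f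

lemma md_xe {M : ℕ} {a : ℤ} (h : (M : ℤ) ≤ a) {f : R} : md M (xe a * f) 0 :=
  md_xpow (by omega)

lemma md_one_sub {M a : ℕ} (h : M ≤ a) : md M (1 - (X : R) ^ a) 1 := by
  rw [md, show (1 : R) - X ^ a - 1 = X ^ a * (-1) by ring]
  exact Dvd.dvd.mul_right (pow_dvd_pow _ h) _

lemma md_inv {M : ℕ} {f g : R} (hf : constantCoeff f = 1) (hg : constantCoeff g = 1)
    (h : md M f g) : md M f⁻¹ g⁻¹ := by
  have hf' : constantCoeff f ≠ 0 := by rw [hf]; norm_num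
  have hg' : constantCoeff g ≠ 0 := by rw [hg]; norm_num
  have key : f⁻¹ - g⁻¹ = f⁻¹ * (g - f) * g⁻¹ := by
    have h1 : f⁻¹ * f = 1 := PowerSeries.inv_mul_cancel f hf'
    have h2 : g * g⁻¹ = 1 := PowerSeries.mul_inv_cancel g hg'
    calc f⁻¹ - g⁻¹ = f⁻¹ * (g * g⁻¹) - (f⁻¹ * f) * g⁻¹ := by rw [h1, h2]; ring
    _ = f⁻¹ * (g - f) * g⁻¹ := by ring
  rw [md, key]
  have : (X : R) ^ M ∣ g - f := md_symm h
  exact Dvd.dvd.mul_right (Dvd.dvd.mul_left this _) _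


/-! ### products `E t n = ∏_{i<n} (1 - X^{t(i+1)})` and Gaussian binomials -/

/-- `∏_{i<n} (1 - X^{t(i+1)})` -/
def E (t n : ℕ) : R := ∏ i ∈ range n, (1 - (X : R) ^ (t * (i + 1)))

lemma E_zero (t : ℕ) : E t 0 = 1 := by simp [E]

lemma E_succ (t n : ℕ) : E t (n + 1) = E t n * (1 - (X : R) ^ (t * (n + 1))) := by
  rw [E, E, Finset.prod_range_succ]

lemma constC_one_sub (a : ℕ) (ha : 1 ≤ a) : constantCoeff (1 - (X : R) ^ a) = 1 := by
  rw [map_sub, map_one, map_pow, constantCoeff_X, zero_pow (by omega)]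
  ring

lemma E_constC {t : ℕ} (ht : 1 ≤ t) (n : ℕ) : constantCoeff (E t n) = 1 := by
  rw [E, map_prod]
  apply Finset.prod_eq_one
  intro i _
  exact constC_one_sub _ (by nlinarith)

lemma E_ne_zero {t : ℕ} (ht : 1 ≤ t) (n : ℕ) : E t n ≠ 0 := by
  intro h
  have := E_constC ht n
  rw [h, map_zero] at this
  norm_num at this

lemma E_mul_inv {t : ℕ} (ht : 1 ≤ t) (n : ℕ) : E t n * (E t n)⁻¹ = 1 :=
  PowerSeries.mul_inv_cancel _ (by rw [E_constC ht]; norm_num)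

/-- tail congruence : `E t (a+b) ≡ E t a mod X^(t*a+1)` -/
lemma md_prod {M : ℕ} {ι : Type*} {t : Finset ι} {f g : ι → R}
    (h : ∀ i ∈ t, md M (f i) (g i)) :
    md M (∏ i ∈ t, f i) (∏ i ∈ t, g i) := by
  classical
  induction t using Finset.induction_on with
  | empty => simp [md_refl]
  | insert _ _ hx ih =>
      rw [Finset.prod_insert hx, Finset.prod_insert hx]
      exact md_mul (h _ (Finset.mem_insert_self _ _))
        (ih fun i hi => h i (Finset.mem_insert_of_mem hi))

lemma md_E_tail {t : ℕ} (ht : 1 ≤ t) (a b : ℕ) : md (t * a + 1) (E t (a + b)) (E t a) := by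
  have h1 : E t (a + b) = E t a * ∏ i ∈ range b, (1 - (X : R) ^ (t * (a + i + 1))) := by
    rw [E, E, Finset.prod_range_add]
  rw [h1]
  have h2 : md (t * a + 1) (E t a * ∏ i ∈ range b, (1 - (X : R) ^ (t * (a + i + 1))))
      (E t a * ∏ _i ∈ range b, (1 : R)) :=
    md_mul md_refl (md_prod fun i _ => md_one_sub (by nlinarith))
  simpa using h2

/-- Gaussian binomial in base `X^t`, defined by Pascal recursion. -/
def gb (t : ℕ) : ℕ → ℕ → R
  | _, 0 => 1
  | 0, _ + 1 => 0
  | n + 1, k + 1 => gb t n k + (X : R) ^ (t * (k + 1)) * gb t n (k + 1)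

lemma gb_zero_right (t n : ℕ) : gb t n 0 = 1 := by cases n <;> rfl

lemma gb_eq_zero (t : ℕ) : ∀ n k : ℕ, n < k → gb t n k = 0 := by
  intro n
  induction n with
  | zero => intro k hk; match k, hk with | k + 1, _ => rfl
  | succ n ih =>
      intro k hk
      match k, hk with
      | k + 1, hk =>
        show gb t n k + (X : R) ^ (t * (k + 1)) * gb t n (k + 1) = 0
        rw [ih k (by omega), ih (k + 1) (by omega), mul_zero, add_zero]

/-- key product formula -/
lemma gb_mul_E (t : ℕ) : ∀ n k : ℕ, k ≤ n → gb t n k * (E t k * E t (n - k)) = E t n := by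
  intro n
  induction n with
  | zero =>
      intro k hk
      interval_cases k
      simp [gb_zero_right, E_zero]
  | succ n ih =>
      intro k hk
      match k with
      | 0 => simp [gb_zero_right, E_zero]
      | k + 1 =>
        show (gb t n k + (X : R) ^ (t * (k + 1)) * gb t n (k + 1)) *
            (E t (k + 1) * E t (n + 1 - (k + 1))) = E t (n + 1)
        have hsub : n + 1 - (k + 1) = n - k := by omega
        rcases Nat.lt_or_ge k n with hlt | hge
        · -- k + 1 ≤ n
          have ih1 := ih k (by omega)
          have ih2 := ih (k + 1) (by omega)
          have hnk : n - k = (n - (k + 1)) + 1 := by omega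
          have hE : E t (n - k) = E t (n - (k + 1)) * (1 - (X:R) ^ (t * (n - k))) := by
            rw [hnk, E_succ, ← hnk]
          have hX : (X:R) ^ (t * (k + 1)) * (X:R) ^ (t * (n - k)) = (X:R) ^ (t * (n + 1)) := by
            rw [← pow_add, ← Nat.mul_add, show (k + 1) + (n - k) = n + 1 by omega]
          rw [hsub, hE, E_succ t k, E_succ t n]
          rw [hE] at ih1
          rw [E_succ t k] at ih2
          linear_combination (1 - (X:R) ^ (t * (k + 1))) * ih1 +
            ((X:R) ^ (t * (k + 1)) * (1 - (X:R) ^ (t * (n - k)))) * ih2 - E t n * hX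
        · -- k = n
          have hk' : k = n := by omega
          subst hk'
          show (gb t k k + (X : R) ^ (t * (k + 1)) * gb t k (k + 1)) *
              (E t (k + 1) * E t (k + 1 - (k + 1))) = E t (k + 1)
          rw [gb_eq_zero t k (k + 1) (by omega), mul_zero, add_zero,
            Nat.sub_self, E_zero, mul_one, E_succ t k]
          have ihk := ih k le_rfl
          rw [Nat.sub_self, E_zero, mul_one] at ihk
          linear_combination (1 - (X:R) ^ (t * (k + 1))) * ihk

lemma gb_self {t : ℕ} (ht : 1 ≤ t) (n : ℕ) : gb t n n = 1 := by
  have h := gb_mul_E t n n le_rfl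
  rw [Nat.sub_self, E_zero, mul_one] at h
  have h2 : gb t n n * E t n = 1 * E t n := by rw [h, one_mul]
  exact mul_right_cancel₀ (E_ne_zero ht n) h2

lemma gb_pascal1 {t : ℕ} (ht : 1 ≤ t) (n k : ℕ) (hk : k ≤ n) :
    gb t (n + 1) (k + 1) = gb t n (k + 1) + (X : R) ^ (t * (n - k)) * gb t n k := by
  rcases eq_or_lt_of_le hk with rfl | hlt
  · rw [gb_self ht, gb_eq_zero t k (k + 1) (by omega), Nat.sub_self, Nat.mul_zero, pow_zero,
      one_mul, gb_self ht, zero_add]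
  · have hk1 : k + 1 ≤ n := hlt
    apply mul_right_cancel₀ (b := E t (k + 1) * E t (n - k))
      (mul_ne_zero (E_ne_zero ht _) (E_ne_zero ht _))
    have h1 := gb_mul_E t (n + 1) (k + 1) (by omega)
    rw [show n + 1 - (k + 1) = n - k by omega] at h1
    have h2 := gb_mul_E t n (k + 1) hk1
    have h3 := gb_mul_E t n k (by omega)
    have hE : E t (n - k) = E t (n - (k + 1)) * (1 - (X:R) ^ (t * (n - k))) := by
      rw [show n - k = (n - (k + 1)) + 1 by omega, E_succ,
        show n - (k + 1) + 1 = n - k by omega]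
    have hEn1 : E t (n + 1) = E t n * (1 - (X:R) ^ (t * (n + 1))) := E_succ t n
    have hEk1 : E t (k + 1) = E t k * (1 - (X:R) ^ (t * (k + 1))) := E_succ t k
    have hX : (X:R) ^ (t * (n - k)) * (X:R) ^ (t * (k + 1)) = (X:R) ^ (t * (n + 1)) := by
      rw [← pow_add, ← Nat.mul_add, show (n - k) + (k + 1) = n + 1 by omega]
    have e1 : gb t n (k + 1) * (E t (k + 1) * E t (n - k)) =
        E t n * (1 - (X:R) ^ (t * (n - k))) := by
      rw [hE]; linear_combination (1 - (X:R) ^ (t * (n - k))) * h2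
    have e2 : ((X:R) ^ (t * (n - k)) * gb t n k) * (E t (k + 1) * E t (n - k)) =
        E t n * (X:R) ^ (t * (n - k)) * (1 - (X:R) ^ (t * (k + 1))) := by
      rw [hEk1]; linear_combination (X:R) ^ (t * (n - k)) * (1 - (X:R) ^ (t * (k + 1))) * h3
    rw [h1, hEn1]
    linear_combination (-1) * e1 - e2 + E t n * hX

/-! ### `ℤ`-indexed Gaussian binomials -/

def gbz (t : ℕ) (n k : ℤ) : R := if 0 ≤ k ∧ k ≤ n then gb t n.toNat k.toNat else 0

lemma gbz_coe (t : ℕ) (n k : ℕ) : gbz t (n : ℤ) (k : ℤ) = gb t n k := by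
  unfold gbz
  split_ifs with h
  · rw [Int.toNat_natCast, Int.toNat_natCast]
  · rw [gb_eq_zero t n k (by omega)]

lemma gbz_neg {t : ℕ} {n k : ℤ} (h : k < 0) : gbz t n k = 0 := if_neg (by omega)

lemma gbz_gt {t : ℕ} {n k : ℤ} (h : n < k) : gbz t n k = 0 := if_neg (by omega)

lemma gbz_zero_right {t : ℕ} {n : ℤ} (h : 0 ≤ n) : gbz t n 0 = 1 := by
  lift n to ℕ using h
  rw [show (0 : ℤ) = ((0 : ℕ) : ℤ) by norm_num, gbz_coe, gb_zero_right]

lemma gbz_self {t : ℕ} (ht : 1 ≤ t) {n : ℤ} (h : 0 ≤ n) : gbz t n n = 1 := by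
  lift n to ℕ using h
  rw [gbz_coe, gb_self ht]

lemma gbz_eq_gb {t : ℕ} {n k : ℤ} (hn : 0 ≤ n) (hk : 0 ≤ k) :
    gbz t n k = gb t n.toNat k.toNat := by
  unfold gbz
  split_ifs with h
  · rfl
  · rw [gb_eq_zero t _ _ (by omega)]

lemma xe_mul_nat (t : ℕ) {k : ℤ} (hk : 0 ≤ k) : xe ((t : ℤ) * k) = (X : R) ^ (t * k.toNat) := by
  unfold xe
  congr 1
  have h : (t : ℤ) * k = ((t * k.toNat : ℕ) : ℤ) := by
    rw [Nat.cast_mul, Int.toNat_of_nonneg hk]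
  rw [h, Int.toNat_natCast]

lemma gbz_pascal2 {t : ℕ} {n : ℤ} (hn : 0 ≤ n) (k : ℤ) :
    gbz t (n + 1) k = gbz t n (k - 1) + xe (t * k) * gbz t n k := by
  rcases lt_trichotomy k 0 with hk | hk | hk
  · rw [gbz_neg hk, gbz_neg (by omega), gbz_neg hk, mul_zero, add_zero]
  · subst hk
    rw [gbz_zero_right (by omega), gbz_neg (by omega), gbz_zero_right hn]
    simp [xe]
  · rw [gbz_eq_gb (by omega) (by omega), gbz_eq_gb hn (by omega), gbz_eq_gb hn (by omega),
      xe_mul_nat t (by omega),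
      show (n + 1).toNat = n.toNat + 1 by omega,
      show k.toNat = (k - 1).toNat + 1 by omega]
    show gb t (n.toNat + 1) ((k-1).toNat + 1) = _
    rfl

lemma gbz_pascal1 {t : ℕ} (ht : 1 ≤ t) {n : ℤ} (hn : 0 ≤ n) (k : ℤ) :
    gbz t (n + 1) k = gbz t n k + xe (t * (n + 1 - k)) * gbz t n (k - 1) := by
  rcases lt_trichotomy k 0 with hk | hk | hk
  · rw [gbz_neg hk, gbz_neg hk, gbz_neg (by omega), mul_zero, add_zero]
  · subst hk
    rw [gbz_zero_right (by omega), gbz_zero_right hn, gbz_neg (by omega), mul_zero, add_zero]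
  · rcases le_or_gt k (n + 1) with hk2 | hk2
    · rw [gbz_eq_gb (by omega) (by omega), gbz_eq_gb hn (by omega), gbz_eq_gb hn (by omega),
        xe_mul_nat t (by omega),
        show (n + 1).toNat = n.toNat + 1 by omega,
        show k.toNat = (k - 1).toNat + 1 by omega,
        show (n + 1 - k).toNat = n.toNat - (k - 1).toNat by omega]
      exact gb_pascal1 ht n.toNat (k - 1).toNat (by omega)
    · rw [gbz_gt (by omega), gbz_gt (by omega), gbz_gt (by omega), mul_zero, add_zero]

/-! ### stabilization -/

lemma E_inv_constC {t : ℕ} (ht : 1 ≤ t) (n : ℕ) : constantCoeff (E t n)⁻¹ ≠ 0 := by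
  rw [PowerSeries.constantCoeff_inv, E_constC ht]
  norm_num

lemma gb_closed {t : ℕ} (ht : 1 ≤ t) {n k : ℕ} (hk : k ≤ n) :
    gb t n k = (E t k)⁻¹ * (E t n * (E t (n - k))⁻¹) := by
  apply mul_right_cancel₀ (b := E t k * E t (n - k))
    (mul_ne_zero (E_ne_zero ht _) (E_ne_zero ht _))
  rw [gb_mul_E t n k hk]
  have h1 : (E t k)⁻¹ * E t k = 1 := PowerSeries.inv_mul_cancel _ (by rw [E_constC ht]; norm_num)
  have h2 : (E t (n - k))⁻¹ * E t (n - k) = 1 :=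
    PowerSeries.inv_mul_cancel _ (by rw [E_constC ht]; norm_num)
  have h3 : (E t k)⁻¹ * (E t n * (E t (n - k))⁻¹) * (E t k * E t (n - k)) =
      E t n * (((E t k)⁻¹ * E t k) * ((E t (n - k))⁻¹ * E t (n - k))) := by ring
  rw [h3, h1, h2, one_mul, mul_one]

/-- stabilisation: `gb t n k ≡ (E t k)⁻¹  mod X^(t(n-k)+1)` -/
lemma md_gb {t : ℕ} (ht : 1 ≤ t) {n k : ℕ} (hk : k ≤ n) :
    md (t * (n - k) + 1) (gb t n k) (E t k)⁻¹ := by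
  have hsplit : E t n = E t (n - k) * ∏ i ∈ range k, (1 - (X : R) ^ (t * ((n - k) + i + 1))) := by
    rw [E, E, show n = (n - k) + k by omega, Finset.prod_range_add]
    rw [show (n - k) + k - k = n - k by omega]
  have hT : md (t * (n - k) + 1)
      (∏ i ∈ range k, (1 - (X : R) ^ (t * ((n - k) + i + 1)))) 1 := by
    have := md_prod (M := t * (n - k) + 1) (t := range k)
      (f := fun i => (1 - (X : R) ^ (t * ((n - k) + i + 1)))) (g := fun _ => 1)
      (fun i _ => md_one_sub (by nlinarith))
    simpa using this
  have hinv : (E t (n - k))⁻¹ * E t (n - k) = 1 :=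
    PowerSeries.inv_mul_cancel _ (by rw [E_constC ht]; norm_num)
  have heq : gb t n k = (E t k)⁻¹ *
      ∏ i ∈ range k, (1 - (X : R) ^ (t * ((n - k) + i + 1))) := by
    rw [gb_closed ht hk, hsplit]
    calc (E t k)⁻¹ * (E t (n - k) * (∏ i ∈ range k, (1 - (X : R) ^ (t * ((n - k) + i + 1)))) *
          (E t (n - k))⁻¹)
        = (E t k)⁻¹ * ((∏ i ∈ range k, (1 - (X : R) ^ (t * ((n - k) + i + 1)))) *
            ((E t (n - k))⁻¹ * E t (n - k))) := by ring
      _ = _ := by rw [hinv, mul_one]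
  have h5 := md_mul (md_refl (M := t * (n - k) + 1) (f := (E t k)⁻¹)) hT
  rw [mul_one] at h5
  rw [heq]
  exact h5

lemma md_E_inv {t : ℕ} (ht : 1 ≤ t) {a b : ℕ} (hab : a ≤ b) :
    md (t * a + 1) (E t b)⁻¹ (E t a)⁻¹ := by
  obtain ⟨c, rfl⟩ := Nat.exists_eq_add_of_le hab
  exact md_inv (E_constC ht _) (E_constC ht _) (md_E_tail ht a c)

/-! ### sum helpers -/

lemma sum_shift (f : ℤ → R) (a b c : ℤ) :
    ∑ j ∈ Icc a b, f (j + c) = ∑ j ∈ Icc (a + c) (b + c), f j := by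
  rw [← Finset.map_add_right_Icc a b c, Finset.sum_map]
  rfl

lemma sum_Icc_shrink (f : ℤ → R) {a b a' b' : ℤ} (ha : a' ≤ a) (hb : b ≤ b')
    (h : ∀ j : ℤ, (a' ≤ j ∧ j < a) ∨ (b < j ∧ j ≤ b') → f j = 0) :
    ∑ j ∈ Icc a' b', f j = ∑ j ∈ Icc a b, f j := by
  apply (Finset.sum_subset (Finset.Icc_subset_Icc ha hb) _).symm
  intro x hx hnx
  rw [Finset.mem_Icc] at hx
  rw [Finset.mem_Icc] at hnx
  exact h x (by omega)

/-! ### finite Jacobi triple product -/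

/-- two-parameter truncated theta sum -/
def Fjt (a b : ℤ) : R := ∑ j ∈ Icc (-b) a, s j • (xe (EZ j) * gbz 5 (a + b) (b + j))

lemma Fjt_succ_left {a b : ℤ} (ha : 0 ≤ a) (hb : 0 ≤ b) :
    Fjt (a + 1) b = (1 - (X : R) ^ (5 * a.toNat + 3)) * Fjt a b := by
  unfold Fjt
  have hstep : ∀ j ∈ Icc (-b) (a + 1),
      s j • (xe (EZ j) * gbz 5 (a + 1 + b) (b + j)) =
        s j • (xe (EZ j) * gbz 5 (a + b) (b + j)) +
        s j • (xe (EZ j) * (xe (5 * (a + 1 - j)) * gbz 5 (a + b) (b + j - 1))) := by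
    intro j _
    have hp := gbz_pascal1 (t := 5) (by norm_num) (n := a + b) (by omega) (b + j)
    rw [show a + 1 + b = a + b + 1 by ring, hp,
      show a + b + 1 - (b + j) = a + 1 - j by ring]
    push_cast
    rw [mul_add, smul_add]
  rw [Finset.sum_congr rfl hstep, Finset.sum_add_distrib]
  have hS1 : ∑ j ∈ Icc (-b) (a + 1), s j • (xe (EZ j) * gbz 5 (a + b) (b + j)) =
      ∑ j ∈ Icc (-b) a, s j • (xe (EZ j) * gbz 5 (a + b) (b + j)) := by
    apply sum_Icc_shrink _ le_rfl (by omega)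
    intro j hj
    rcases hj with hj | hj
    · rw [gbz_neg (by omega), mul_zero, smul_zero]
    · rw [gbz_gt (by omega), mul_zero, smul_zero]
  have hS2 : ∑ j ∈ Icc (-b) (a + 1),
      s j • (xe (EZ j) * (xe (5 * (a + 1 - j)) * gbz 5 (a + b) (b + j - 1))) =
      ∑ j ∈ Icc (-b + 1) (a + 1),
        s j • (xe (EZ j) * (xe (5 * (a + 1 - j)) * gbz 5 (a + b) (b + j - 1))) := by
    apply sum_Icc_shrink _ (by omega) le_rfl
    intro j hj
    rcases hj with hj | hj
    · rw [gbz_neg (by omega), mul_zero, mul_zero, smul_zero]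
    · rw [gbz_gt (by omega), mul_zero, mul_zero, smul_zero]
  have hS3 : ∑ j ∈ Icc (-b + 1) (a + 1),
      s j • (xe (EZ j) * (xe (5 * (a + 1 - j)) * gbz 5 (a + b) (b + j - 1))) =
      ∑ j ∈ Icc (-b) a,
        s (j + 1) • (xe (EZ (j + 1)) * (xe (5 * (a - j)) * gbz 5 (a + b) (b + j))) := by
    rw [← sum_shift (fun j => s j • (xe (EZ j) * (xe (5 * (a + 1 - j)) * gbz 5 (a + b) (b + j - 1))))
      (-b) a 1]
    apply Finset.sum_congr rfl
    intro j _
    rw [show a + 1 - (j + 1) = a - j by ring, show b + (j + 1) - 1 = b + j by ring]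
  have hS4 : ∀ j ∈ Icc (-b) a,
      s (j + 1) • (xe (EZ (j + 1)) * (xe (5 * (a - j)) * gbz 5 (a + b) (b + j))) =
      -((X : R) ^ (5 * a.toNat + 3) * (s j • (xe (EZ j) * gbz 5 (a + b) (b + j)))) := by
    intro j hj
    rw [Finset.mem_Icc] at hj
    have hxe : xe (EZ (j + 1)) * xe (5 * (a - j)) = (X : R) ^ (5 * a.toNat + 3) * xe (EZ j) := by
      rw [← xe_add (EZ_nonneg _) (by omega)]
      have heq : EZ (j + 1) + 5 * (a - j) = (((5 * a.toNat + 3 : ℕ) : ℤ)) + EZ j := by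
        have h1 := EZ_succ j
        have h2 : ((5 * a.toNat + 3 : ℕ) : ℤ) = 5 * a + 3 := by
          push_cast [Int.toNat_of_nonneg ha]; ring
        omega
      rw [heq, xe_add (by positivity) (EZ_nonneg _), xe_natCast]
    have hre : xe (EZ (j + 1)) * (xe (5 * (a - j)) * gbz 5 (a + b) (b + j)) =
        (X : R) ^ (5 * a.toNat + 3) * (xe (EZ j) * gbz 5 (a + b) (b + j)) := by
      rw [← mul_assoc, hxe, mul_assoc]
    rw [s_add_one, hre, neg_smul, mul_smul_comm]
  rw [hS1, hS2, hS3, Finset.sum_congr rfl hS4, Finset.sum_neg_distrib, ← Finset.mul_sum]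
  ring

lemma Fjt_succ_right {a b : ℤ} (ha : 0 ≤ a) (hb : 0 ≤ b) :
    Fjt a (b + 1) = (1 - (X : R) ^ (5 * b.toNat + 2)) * Fjt a b := by
  unfold Fjt
  have hstep : ∀ j ∈ Icc (-(b + 1)) a,
      s j • (xe (EZ j) * gbz 5 (a + (b + 1)) (b + 1 + j)) =
        s j • (xe (EZ j) * gbz 5 (a + b) (b + j)) +
        s j • (xe (EZ j) * (xe (5 * (b + 1 + j)) * gbz 5 (a + b) (b + 1 + j))) := by
    intro j _
    have hp := gbz_pascal2 (t := 5) (n := a + b) (by omega) (b + 1 + j)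
    rw [show a + (b + 1) = a + b + 1 by ring, hp,
      show b + 1 + j - 1 = b + j by ring]
    push_cast
    rw [mul_add, smul_add]
  rw [Finset.sum_congr rfl hstep, Finset.sum_add_distrib]
  have hS1 : ∑ j ∈ Icc (-(b + 1)) a, s j • (xe (EZ j) * gbz 5 (a + b) (b + j)) =
      ∑ j ∈ Icc (-b) a, s j • (xe (EZ j) * gbz 5 (a + b) (b + j)) := by
    apply sum_Icc_shrink _ (by omega) le_rfl
    intro j hj
    rcases hj with hj | hj
    · rw [gbz_neg (by omega), mul_zero, smul_zero]
    · rw [gbz_gt (by omega), mul_zero, smul_zero]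
  have hS2 : ∑ j ∈ Icc (-(b + 1)) a,
      s j • (xe (EZ j) * (xe (5 * (b + 1 + j)) * gbz 5 (a + b) (b + 1 + j))) =
      ∑ j ∈ Icc (-(b + 1)) (a - 1),
        s j • (xe (EZ j) * (xe (5 * (b + 1 + j)) * gbz 5 (a + b) (b + 1 + j))) := by
    apply sum_Icc_shrink _ le_rfl (by omega)
    intro j hj
    rcases hj with hj | hj
    · rw [gbz_neg (by omega), mul_zero, mul_zero, smul_zero]
    · rw [gbz_gt (by omega), mul_zero, mul_zero, smul_zero]
  have hS3 : ∑ j ∈ Icc (-(b + 1)) (a - 1),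
      s j • (xe (EZ j) * (xe (5 * (b + 1 + j)) * gbz 5 (a + b) (b + 1 + j))) =
      ∑ j ∈ Icc (-b) a,
        s (j - 1) • (xe (EZ (j - 1)) * (xe (5 * (b + j)) * gbz 5 (a + b) (b + j))) := by
    rw [show -(b + 1) = -b + -1 by ring, show a - 1 = a + -1 by ring]
    rw [← sum_shift
      (fun j => s j • (xe (EZ j) * (xe (5 * (b + 1 + j)) * gbz 5 (a + b) (b + 1 + j))))
      (-b) a (-1)]
    apply Finset.sum_congr rfl
    intro j _
    rw [show j + -1 = j - 1 by ring, show b + 1 + (j - 1) = b + j by ring]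
  have hS4 : ∀ j ∈ Icc (-b) a,
      s (j - 1) • (xe (EZ (j - 1)) * (xe (5 * (b + j)) * gbz 5 (a + b) (b + j))) =
      -((X : R) ^ (5 * b.toNat + 2) * (s j • (xe (EZ j) * gbz 5 (a + b) (b + j)))) := by
    intro j hj
    rw [Finset.mem_Icc] at hj
    have hxe : xe (EZ (j - 1)) * xe (5 * (b + j)) = (X : R) ^ (5 * b.toNat + 2) * xe (EZ j) := by
      rw [← xe_add (EZ_nonneg _) (by omega)]
      have heq : EZ (j - 1) + 5 * (b + j) = (((5 * b.toNat + 2 : ℕ) : ℤ)) + EZ j := by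
        have h1 := EZ_pred j
        have h2 : ((5 * b.toNat + 2 : ℕ) : ℤ) = 5 * b + 2 := by
          push_cast [Int.toNat_of_nonneg hb]; ring
        omega
      rw [heq, xe_add (by positivity) (EZ_nonneg _), xe_natCast]
    have hre : xe (EZ (j - 1)) * (xe (5 * (b + j)) * gbz 5 (a + b) (b + j)) =
        (X : R) ^ (5 * b.toNat + 2) * (xe (EZ j) * gbz 5 (a + b) (b + j)) := by
      rw [← mul_assoc, hxe, mul_assoc]
    rw [s_sub_one, hre, neg_smul, mul_smul_comm]
  rw [hS1, hS2, hS3, Finset.sum_congr rfl hS4, Finset.sum_neg_distrib, ← Finset.mul_sum]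
  ring

lemma Fjt_zero : Fjt 0 0 = 1 := by
  unfold Fjt
  rw [show -(0:ℤ) = 0 by ring, Finset.Icc_self, Finset.sum_singleton,
    show (0:ℤ) + 0 = 0 by ring]
  rw [show EZ 0 = 0 from rfl, xe_zero, gbz_zero_right (by norm_num)]
  show s 0 • ((1:R) * 1) = 1
  rw [mul_one, show s 0 = 1 from rfl, one_smul]

/-- the finite Jacobi triple product identity, specialised -/
lemma Fjt_eq (T : ℕ) :
    Fjt (T : ℤ) (T : ℤ) =
      ∏ k ∈ range T, ((1 - (X : R) ^ (5 * k + 2)) * (1 - (X : R) ^ (5 * k + 3))) := by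
  induction T with
  | zero => simpa using Fjt_zero
  | succ T ih =>
      have h1 : ((T + 1 : ℕ) : ℤ) = (T : ℤ) + 1 := by push_cast; ring
      rw [h1, Fjt_succ_left (by positivity) (by positivity),
        Fjt_succ_right (by positivity) (by positivity), ih, Finset.prod_range_succ]
      rw [Int.toNat_natCast]
      ring

/-! ### Schur's polynomials : pentagonal-type expansion and q-series expansion -/

def kk (n j : ℤ) : ℤ := (n - 5 * j) / 2

/-- summand of the pentagonal-type expansion -/
def tS (n j : ℤ) : R := s j • (xe (EZ j) * gbz 1 n (kk n j))

def Ssum (n : ℤ) : R := ∑ j ∈ Icc (-n) n, tS n j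

/-- summand of the q-series expansion -/
def RSsum (n : ℤ) : R := ∑ k ∈ Icc 0 n, xe (k ^ 2) * gbz 1 (n - k) k

lemma tS_zero {n j : ℤ} (h : 5 * j > n ∨ 5 * j < -n - 1) : tS n j = 0 := by
  unfold tS
  rcases h with h | h
  · rw [gbz_neg (by unfold kk; omega), mul_zero, smul_zero]
  · rw [gbz_gt (by unfold kk; omega), mul_zero, smul_zero]

def LA (m j : ℤ) : R :=
  if (m + j) % 2 = 0 then s j • (xe (EZ j + kk (m + 2) j) * gbz 1 m (kk (m + 2) j)) else 0

def LB (m j : ℤ) : R :=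
  if (m + j) % 2 = 0 then 0
  else s j • (xe (EZ j + (m + 5 * j + 3) / 2) * gbz 1 m ((m - 5 * j - 3) / 2))

lemma LB_zero {m j : ℤ} (h : 5 * j ≥ m - 2 ∨ 5 * j ≤ -m - 4) : LB m j = 0 := by
  unfold LB
  split_ifs with hc
  · rfl
  · rcases h with h | h
    · rw [gbz_neg (by omega), mul_zero, smul_zero]
    · rw [gbz_gt (by omega), mul_zero, smul_zero]

lemma LA_LB (m j : ℤ) : LA m j + LB m (j - 1) = 0 := by
  unfold LA LB
  rcases Int.emod_two_eq (m + j) with hp | hp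
  · rw [if_pos hp, if_neg (by omega)]
    have h1 := EZ_pred j
    rw [show (m - 5 * (j - 1) - 3) / 2 = kk (m + 2) j by unfold kk; omega,
      show EZ (j - 1) + (m + 5 * (j - 1) + 3) / 2 = EZ j + kk (m + 2) j by unfold kk; omega,
      s_sub_one, neg_smul, add_neg_cancel]
  · rw [if_neg (by omega), if_pos (by omega), add_zero]

/-- pointwise recursion step -/
lemma tS_rec {m : ℤ} (hm : 0 ≤ m) (j : ℤ) :
    tS (m + 2) j = tS (m + 1) j + xe (m + 1) * tS m j + LA m j + LB m j := by
  have honecast : ∀ z : ℤ, ((1 : ℕ) : ℤ) * z = z := by intro z; push_cast; ring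
  rcases Int.emod_two_eq (m + j) with hp | hp
  · -- even case
    set k := kk (m + 2) j with hk
    have hk2 : 2 * k = m + 2 - 5 * j := by rw [hk]; unfold kk; omega
    have hp2 := gbz_pascal2 (t := 1) (n := m + 1) (by omega) k
    have hp1 := gbz_pascal1 (t := 1) (by norm_num) (n := m) hm k
    rw [honecast] at hp2
    rw [honecast] at hp1
    have hkm1 : kk (m + 1) j = k - 1 := by unfold kk; omega
    have hkm : kk m j = k - 1 := by unfold kk; omega
    have hT2 : tS (m + 2) j = s j • (xe (EZ j) * gbz 1 (m + 1 + 1) k) := by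
      unfold tS; rw [← hk, show m + 1 + 1 = m + 2 by ring]
    rw [hT2, hp2, hp1]
    have e1 : s j • (xe (EZ j) * gbz 1 (m + 1) (k - 1)) = tS (m + 1) j := by
      unfold tS; rw [hkm1]
    have e2 : s j • (xe (EZ j) * (xe k * (xe (m + 1 - k) * gbz 1 m (k - 1)))) =
        xe (m + 1) * tS m j := by
      unfold tS
      rw [hkm, mul_smul_comm]
      rcases le_or_gt 0 k with h0 | h0
      · rcases le_or_gt k (m + 1) with h1 | h1
        · congr 1
          rw [← mul_assoc (xe k), ← xe_add h0 (by omega),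
            show k + (m + 1 - k) = m + 1 by ring]
          ring
        · rw [gbz_gt (show (m : ℤ) < k - 1 by omega)]
          simp
      · rw [gbz_neg (show k - 1 < 0 by omega)]
        simp
    have e3 : s j • (xe (EZ j) * (xe k * gbz 1 m k)) = LA m j := by
      unfold LA
      rw [if_pos hp, ← hk]
      rcases le_or_gt 0 k with h0 | h0
      · rw [← mul_assoc, ← xe_add (EZ_nonneg _) h0]
      · rw [gbz_neg h0]
        simp
    have e4 : LB m j = 0 := by unfold LB; rw [if_pos hp]
    simp only [mul_add, smul_add]
    rw [e1, e2, e3, e4]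
    ring
  · -- odd case
    set k := kk (m + 2) j with hk
    have hk2 : 2 * k = m + 1 - 5 * j := by rw [hk]; unfold kk; omega
    have hp1 := gbz_pascal1 (t := 1) (by norm_num) (n := m + 1) (by omega) k
    have hp2 := gbz_pascal2 (t := 1) (n := m) hm (k - 1)
    rw [honecast, show m + 1 + 1 - k = m + 2 - k by ring] at hp1
    rw [honecast, show k - 1 - 1 = k - 2 by ring] at hp2
    have hkm1 : kk (m + 1) j = k := by unfold kk; omega
    have hkm : kk m j = k - 1 := by unfold kk; omega
    have hT2 : tS (m + 2) j = s j • (xe (EZ j) * gbz 1 (m + 1 + 1) k) := by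
      unfold tS; rw [← hk, show m + 1 + 1 = m + 2 by ring]
    rw [hT2, hp1, hp2]
    have e1 : s j • (xe (EZ j) * gbz 1 (m + 1) k) = tS (m + 1) j := by
      unfold tS; rw [hkm1]
    have e2 : s j • (xe (EZ j) * (xe (m + 2 - k) * (xe (k - 1) * gbz 1 m (k - 1)))) =
        xe (m + 1) * tS m j := by
      unfold tS
      rw [hkm, mul_smul_comm]
      rcases le_or_gt 1 k with h0 | h0
      · rcases le_or_gt k (m + 2) with h1 | h1
        · congr 1
          rw [← mul_assoc (xe (m + 2 - k)), ← xe_add (by omega) (show (0:ℤ) ≤ k - 1 by omega),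
            show m + 2 - k + (k - 1) = m + 1 by ring]
          ring
        · rw [gbz_gt (show (m : ℤ) < k - 1 by omega)]
          simp
      · rw [gbz_neg (show k - 1 < 0 by omega)]
        simp
    have e3 : s j • (xe (EZ j) * (xe (m + 2 - k) * gbz 1 m (k - 2))) = LB m j := by
      unfold LB
      rw [if_neg (by omega)]
      rw [show (m - 5 * j - 3) / 2 = k - 2 by omega,
        show (m + 5 * j + 3) / 2 = m + 2 - k by omega]
      rcases le_or_gt 0 (m + 2 - k) with h0 | h0
      · rw [← mul_assoc, ← xe_add (EZ_nonneg _) h0]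
      · rw [gbz_gt (show (m : ℤ) < k - 2 by omega)]
        simp
    have e4 : LA m j = 0 := by unfold LA; rw [if_neg (by omega)]
    simp only [mul_add, smul_add]
    rw [e1, e2, e3, e4]
    ring

lemma Ssum_ext {n : ℤ} (hn : 0 ≤ n) {A B : ℤ} (hA : A ≤ -n) (hB : n ≤ B) :
    ∑ j ∈ Icc A B, tS n j = Ssum n := by
  unfold Ssum
  apply sum_Icc_shrink _ hA hB
  intro j hj
  apply tS_zero
  omega

lemma sum_LB_ext {m : ℤ} (hm : 0 ≤ m) {A B : ℤ} (hA : A ≤ -(m + 1)) (hB : m + 1 ≤ B) :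
    ∑ j ∈ Icc A B, LB m j = ∑ j ∈ Icc (-(m + 1)) (m + 1), LB m j := by
  apply sum_Icc_shrink _ hA hB
  intro j hj
  apply LB_zero
  omega

lemma sum_L_zero {m : ℤ} (hm : 0 ≤ m) :
    ∑ j ∈ Icc (-(m + 2)) (m + 2), (LA m j + LB m j) = 0 := by
  rw [Finset.sum_add_distrib]
  have h1 : ∑ j ∈ Icc (-(m + 2)) (m + 2), LA m j =
      - ∑ j ∈ Icc (-(m + 2)) (m + 2), LB m (j - 1) := by
    rw [← Finset.sum_neg_distrib]
    apply Finset.sum_congr rfl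
    intro j _
    linear_combination LA_LB m j
  have h2 : ∑ j ∈ Icc (-(m + 2)) (m + 2), LB m (j - 1) =
      ∑ j ∈ Icc (-(m + 3)) (m + 1), LB m j := by
    rw [show -(m + 3) = -(m + 2) + -1 by ring, show m + 1 = m + 2 + -1 by ring,
      ← sum_shift (fun j => LB m j) (-(m + 2)) (m + 2) (-1)]
    apply Finset.sum_congr rfl
    intro j _
    rw [show j + -1 = j - 1 by ring]
  have a1 := sum_LB_ext hm (A := -(m + 3)) (B := m + 1) (by omega) le_rfl
  have a2 := sum_LB_ext hm (A := -(m + 2)) (B := m + 2) (by omega) (by omega)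
  rw [h1, h2, a1, a2]
  ring

lemma Ssum_rec {m : ℤ} (hm : 0 ≤ m) :
    Ssum (m + 2) = Ssum (m + 1) + xe (m + 1) * Ssum m := by
  have h0 : Ssum (m + 2) = ∑ j ∈ Icc (-(m + 2)) (m + 2), tS (m + 2) j := rfl
  rw [h0, Finset.sum_congr rfl (fun j _ => tS_rec hm j), Finset.sum_add_distrib,
    Finset.sum_add_distrib, Finset.sum_add_distrib]
  have hz : ∑ j ∈ Icc (-(m + 2)) (m + 2), LA m j + ∑ j ∈ Icc (-(m + 2)) (m + 2), LB m j
      = 0 := by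
    rw [← Finset.sum_add_distrib]
    exact sum_L_zero hm
  rw [add_assoc, hz, add_zero, Ssum_ext (by omega) (by omega) (by omega), ← Finset.mul_sum,
    Ssum_ext (by omega) (by omega) (by omega)]

/-! ### q-series expansion recursion -/

lemma RSsum_ext {n : ℤ} (hn : 0 ≤ n) {B : ℤ} (hB : n ≤ B) :
    ∑ k ∈ Icc 0 B, xe (k ^ 2) * gbz 1 (n - k) k = RSsum n := by
  unfold RSsum
  apply sum_Icc_shrink _ le_rfl hB
  intro k hk
  rcases hk with hk | hk
  · rw [gbz_neg hk.2, mul_zero]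
  · rw [gbz_gt (by omega), mul_zero]

lemma RSsum_rec {m : ℤ} (hm : 0 ≤ m) :
    RSsum (m + 2) = RSsum (m + 1) + xe (m + 1) * RSsum m := by
  have h0 : RSsum (m + 2) = ∑ k ∈ Icc 0 (m + 2), xe (k ^ 2) * gbz 1 (m + 2 - k) k := rfl
  have h1 : ∑ k ∈ Icc (0:ℤ) (m + 2), xe (k ^ 2) * gbz 1 (m + 2 - k) k =
      ∑ k ∈ Icc (0:ℤ) (m + 1), xe (k ^ 2) * gbz 1 (m + 2 - k) k := by
    apply sum_Icc_shrink _ le_rfl (by omega)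
    intro k hk
    rcases hk with hk | hk
    · rw [gbz_neg hk.2, mul_zero]
    · rw [gbz_gt (by omega), mul_zero]
  have honecast : ∀ z : ℤ, ((1 : ℕ) : ℤ) * z = z := by intro z; push_cast; ring
  have h2 : ∀ k ∈ Icc (0:ℤ) (m + 1), xe (k ^ 2) * gbz 1 (m + 2 - k) k =
      xe (k ^ 2) * gbz 1 (m + 1 - k) k +
      xe (k ^ 2) * (xe (m + 2 - 2 * k) * gbz 1 (m + 1 - k) (k - 1)) := by
    intro k hk
    rw [Finset.mem_Icc] at hk
    have hp := gbz_pascal1 (t := 1) (by norm_num) (n := m + 1 - k) (by omega) k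
    rw [honecast] at hp
    rw [show m + 2 - k = m + 1 - k + 1 by ring, hp,
      show m + 1 - k + 1 - k = m + 2 - 2 * k by ring, mul_add]
  rw [h0, h1, Finset.sum_congr rfl h2, Finset.sum_add_distrib]
  have h3 : ∑ k ∈ Icc (0:ℤ) (m + 1), xe (k ^ 2) * gbz 1 (m + 1 - k) k = RSsum (m + 1) :=
    RSsum_ext (by omega) le_rfl
  have h4 : ∀ k ∈ Icc (0:ℤ) (m + 1),
      xe (k ^ 2) * (xe (m + 2 - 2 * k) * gbz 1 (m + 1 - k) (k - 1)) =
      xe (m + 1) * (xe ((k - 1) ^ 2) * gbz 1 (m + 1 - k) (k - 1)) := by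
    intro k hk
    rw [Finset.mem_Icc] at hk
    rcases le_or_gt 1 k with h6 | h6
    · rcases le_or_gt (2 * k) (m + 2) with h5 | h5
      · rw [← mul_assoc, ← xe_add (by positivity) (by omega), ← mul_assoc,
          ← xe_add (by omega) (by positivity)]
        congr 2
        ring
      · rw [gbz_gt (by omega)]
        simp
    · rw [gbz_neg (by omega)]
      simp
  have h5 : ∑ k ∈ Icc (0:ℤ) (m + 1), xe ((k - 1) ^ 2) * gbz 1 (m + 1 - k) (k - 1) =
      ∑ k ∈ Icc (1:ℤ) (m + 1), xe ((k - 1) ^ 2) * gbz 1 (m + 1 - k) (k - 1) := by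
    apply sum_Icc_shrink _ (by omega) le_rfl
    intro k hk
    rcases hk with hk | hk
    · rw [gbz_neg (by omega), mul_zero]
    · rw [gbz_gt (by omega), mul_zero]
  have h6 : ∑ k ∈ Icc (1:ℤ) (m + 1), xe ((k - 1) ^ 2) * gbz 1 (m + 1 - k) (k - 1) =
      RSsum m := by
    have hshift := sum_shift (fun k => xe ((k - 1) ^ 2) * gbz 1 (m + 1 - k) (k - 1)) 0 m 1
    rw [show (0:ℤ) + 1 = 1 by ring] at hshift
    rw [← hshift]
    have : ∀ k ∈ Icc (0:ℤ) m, xe ((k + 1 - 1) ^ 2) * gbz 1 (m + 1 - (k + 1)) (k + 1 - 1) =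
        xe (k ^ 2) * gbz 1 (m - k) k := by
      intro k _
      rw [show k + 1 - 1 = k by ring, show m + 1 - (k + 1) = m - k by ring]
    rw [Finset.sum_congr rfl this]
    rfl
  rw [Finset.sum_congr rfl h4, ← Finset.mul_sum, h3, h5, h6]

lemma Ssum_zero : Ssum 0 = 1 := by
  unfold Ssum
  rw [neg_zero, Finset.Icc_self, Finset.sum_singleton]
  unfold tS
  rw [show kk 0 0 = 0 by unfold kk; omega, show EZ 0 = 0 by unfold EZ; norm_num,
    xe_zero, gbz_zero_right le_rfl, mul_one, show s 0 = 1 by unfold s; norm_num, one_smul]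

lemma Ssum_one : Ssum 1 = 1 := by
  unfold Ssum
  rw [show ∑ j ∈ Icc (-(1:ℤ)) 1, tS 1 j = ∑ j ∈ Icc (0:ℤ) 0, tS 1 j by
    apply sum_Icc_shrink _ (by omega) (by omega)
    intro j hj
    apply tS_zero
    omega]
  rw [Finset.Icc_self, Finset.sum_singleton]
  unfold tS
  rw [show kk 1 0 = 0 by unfold kk; omega, show EZ 0 = 0 by unfold EZ; norm_num,
    xe_zero, gbz_zero_right (by omega), mul_one, show s 0 = 1 by unfold s; norm_num, one_smul]

lemma RSsum_zero : RSsum 0 = 1 := by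
  unfold RSsum
  rw [Finset.Icc_self, Finset.sum_singleton]
  norm_num
  rw [xe_zero, gbz_zero_right le_rfl, one_mul]

lemma RSsum_one : RSsum 1 = 1 := by
  unfold RSsum
  rw [show ∑ k ∈ Icc (0:ℤ) 1, xe (k ^ 2) * gbz 1 (1 - k) k =
      ∑ k ∈ Icc (0:ℤ) 0, xe (k ^ 2) * gbz 1 (1 - k) k by
    apply sum_Icc_shrink _ le_rfl (by omega)
    intro k hk
    rcases hk with hk | hk
    · rw [gbz_neg hk.2, mul_zero]
    · rw [gbz_gt (by omega), mul_zero]]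
  rw [Finset.Icc_self, Finset.sum_singleton,
    show (0:ℤ)^2 = 0 by ring, xe_zero, gbz_zero_right (by omega), one_mul]

lemma S_eq_RS : ∀ n : ℕ, Ssum (n : ℤ) = RSsum (n : ℤ) := by
  have key : ∀ n : ℕ, Ssum (n : ℤ) = RSsum (n : ℤ) ∧
      Ssum ((n : ℤ) + 1) = RSsum ((n : ℤ) + 1) := by
    intro n
    induction n with
    | zero =>
        constructor
        · rw [show ((0:ℕ):ℤ) = 0 by norm_num, Ssum_zero, RSsum_zero]
        · rw [show ((0:ℕ):ℤ) + 1 = 1 by norm_num, Ssum_one, RSsum_one]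
    | succ n ih =>
        constructor
        · rw [show ((n + 1 : ℕ) : ℤ) = (n : ℤ) + 1 by push_cast; ring]
          exact ih.2
        · rw [show ((n + 1 : ℕ) : ℤ) + 1 = (n : ℤ) + 2 by push_cast; ring,
            Ssum_rec (by positivity), RSsum_rec (by positivity), ih.1, ih.2]
  exact fun n => (key n).1

/-! ### products by residue classes mod 5 -/

def PP (r : ℕ) : R := ∏ k ∈ range r, ((1 - (X:R) ^ (5 * k + 1)) * (1 - (X:R) ^ (5 * k + 4)))

def QQ (r : ℕ) : R := ∏ k ∈ range r, ((1 - (X:R) ^ (5 * k + 2)) * (1 - (X:R) ^ (5 * k + 3)))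

lemma E_one (n : ℕ) : E 1 n = ∏ i ∈ range n, (1 - (X:R) ^ (i + 1)) := by
  unfold E
  apply Finset.prod_congr rfl
  intro i _
  rw [one_mul]

lemma PP_constC (r : ℕ) : constantCoeff (PP r) = 1 := by
  unfold PP
  rw [map_prod]
  apply Finset.prod_eq_one
  intro i _
  rw [map_mul, constC_one_sub _ (by omega), constC_one_sub _ (by omega), one_mul]

lemma QQ_constC (r : ℕ) : constantCoeff (QQ r) = 1 := by
  unfold QQ
  rw [map_prod]
  apply Finset.prod_eq_one
  intro i _
  rw [map_mul, constC_one_sub _ (by omega), constC_one_sub _ (by omega), one_mul]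

/-- Euler splitting of `∏_{i<5r}(1-X^(i+1))` into residue classes -/
lemma euler_split (r : ℕ) : E 1 (5 * r) = PP r * QQ r * E 5 r := by
  induction r with
  | zero => rw [Nat.mul_zero, E_zero, E_zero]; unfold PP QQ; simp
  | succ r ih =>
      have h5 : 5 * (r + 1) = (5 * r) + 1 + 1 + 1 + 1 + 1 := by ring
      rw [h5, E_succ, E_succ, E_succ, E_succ, E_succ, ih]
      unfold PP QQ
      rw [Finset.prod_range_succ, Finset.prod_range_succ]
      rw [show E 5 (r + 1) = E 5 r * (1 - (X:R) ^ (5 * (r + 1))) from E_succ 5 r]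
      simp only [one_mul]
      ring

lemma QQ_tail {r m : ℕ} (hrm : r ≤ m) {M : ℕ} (hM : M ≤ 5 * r + 2) :
    md M (QQ m) (QQ r) := by
  obtain ⟨c, rfl⟩ := Nat.exists_eq_add_of_le hrm
  unfold QQ
  rw [Finset.prod_range_add]
  have h2 : md M (∏ k ∈ range c, ((1 - (X:R) ^ (5 * (r + k) + 2)) * (1 - (X:R) ^ (5 * (r + k) + 3)))) 1 := by
    have := md_prod (M := M) (t := range c)
      (f := fun k => ((1 - (X:R) ^ (5 * (r + k) + 2)) * (1 - (X:R) ^ (5 * (r + k) + 3))))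
      (g := fun _ => 1)
      (fun i _ => by
        have := md_mul (md_one_sub (show M ≤ 5 * (r + i) + 2 by omega))
          (md_one_sub (show M ≤ 5 * (r + i) + 3 by omega))
        simpa using this)
    simpa using this
  have h3 := md_mul (md_refl (M := M)
    (f := ∏ k ∈ range r, ((1 - (X:R) ^ (5 * k + 2)) * (1 - (X:R) ^ (5 * k + 3))))) h2
  rw [mul_one] at h3
  exact h3

lemma prod_inv {ι : Type*} (t : Finset ι) (f : ι → R) :
    (∏ i ∈ t, f i)⁻¹ = ∏ i ∈ t, (f i)⁻¹ := by
  classical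
  induction t using Finset.induction_on with
  | empty => simp
  | insert _ _ hx ih =>
      rw [Finset.prod_insert hx, Finset.prod_insert hx, PowerSeries.mul_inv_rev, ← ih]
      ring

lemma sum_Icc_toNat (f : ℕ → R) (N : ℕ) :
    ∑ j ∈ Icc (0:ℤ) (N : ℤ), f j.toNat = ∑ n ∈ range (N + 1), f n := by
  induction N with
  | zero => rw [show ((0:ℕ):ℤ) = 0 by norm_num, Finset.Icc_self, Finset.sum_singleton]; simp
  | succ N ih =>
      rw [show ((N + 1 : ℕ) : ℤ) = (N : ℤ) + 1 by push_cast; ring]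
      have hins : Icc (0:ℤ) ((N:ℤ) + 1) = insert ((N:ℤ) + 1) (Icc 0 (N:ℤ)) := by
        ext x
        simp only [Finset.mem_Icc, Finset.mem_insert]
        omega
      rw [hins, Finset.sum_insert (by simp), show ((N:ℤ) + 1).toNat = N + 1 by omega,
        Finset.sum_range_succ f (N + 1), ih]
      exact add_comm (f (N + 1)) (∑ x ∈ range (N + 1), f x)

/-! ### limits -/

lemma md_smul_zero {M : ℕ} (c : ℚ) {f : R} (h : md M f 0) : md M (c • f) 0 := by
  have := md_smul c h
  rwa [smul_zero] at this

lemma sq_le_bound {j : ℤ} {N : ℕ} (h : j ^ 2 ≤ (N : ℤ)) : -(N : ℤ) ≤ j ∧ j ≤ (N : ℤ) := by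
  constructor <;> nlinarith

/-- sum side limit -/
lemma lemA (N : ℕ) : md (N + 1) (RSsum ((15 * (N + 1) : ℕ) : ℤ))
    (∑ n ∈ range (N + 1), (X : R) ^ (n ^ 2) * (∏ j ∈ range n, (1 - (X : R) ^ (j + 1)))⁻¹) := by
  set m : ℕ := 15 * (N + 1) with hm
  have hmN : (N : ℤ) + 1 ≤ (m : ℤ) := by push_cast; omega
  set h : ℤ → R := fun k => xe (k ^ 2) * (E 1 k.toNat)⁻¹ with hh
  -- step 1 : termwise stabilisation
  have step1 : md (N + 1) (RSsum (m : ℤ)) (∑ k ∈ Icc (0:ℤ) (m:ℤ), h k) := by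
    apply md_sum
    intro k hk
    rw [Finset.mem_Icc] at hk
    rcases le_or_gt k (N : ℤ) with hkN | hkN
    · have hgb : gbz 1 ((m : ℤ) - k) k = gb 1 ((m:ℤ) - k).toNat k.toNat :=
        gbz_eq_gb (by omega) (by omega)
      have h1 : md (N + 1) (gb 1 ((m:ℤ) - k).toNat k.toNat) (E 1 k.toNat)⁻¹ := by
        apply md_mono _ (md_gb (le_refl 1) (show k.toNat ≤ ((m:ℤ) - k).toNat by omega))
        omega
      show md (N + 1) (xe (k ^ 2) * gbz 1 ((m : ℤ) - k) k) _
      rw [hgb]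
      exact md_mul md_refl h1
    · have hk2 : ((N + 1 : ℕ) : ℤ) ≤ k ^ 2 := by push_cast; nlinarith
      have z1 : md (N + 1) (xe (k ^ 2) * gbz 1 ((m : ℤ) - k) k) 0 := md_xe hk2
      have z2 : md (N + 1) (h k) 0 := md_xe hk2
      exact md_trans z1 (md_symm z2)
  -- step 2 : cut the sum at N
  set h' : ℤ → R := fun k => if k ≤ (N : ℤ) then h k else 0 with hh'
  have step2 : md (N + 1) (∑ k ∈ Icc (0:ℤ) (m:ℤ), h k) (∑ k ∈ Icc (0:ℤ) (m:ℤ), h' k) := by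
    apply md_sum
    intro k hk
    rw [Finset.mem_Icc] at hk
    rcases le_or_gt k (N : ℤ) with hkN | hkN
    · simp only [hh']
      rw [if_pos hkN]
      exact md_refl
    · simp only [hh']
      rw [if_neg (by omega)]
      exact md_xe (show ((N + 1 : ℕ) : ℤ) ≤ k ^ 2 by push_cast; nlinarith)
  have step3 : ∑ k ∈ Icc (0:ℤ) (m:ℤ), h' k = ∑ k ∈ Icc (0:ℤ) (N:ℤ), h k := by
    rw [sum_Icc_shrink h' (b := (N:ℤ)) (b' := (m:ℤ)) le_rfl (by omega) (fun j hj => by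
      rcases hj with hj | hj
      · omega
      · simp only [hh']
        rw [if_neg (by omega)])]
    apply Finset.sum_congr rfl
    intro k hk
    rw [Finset.mem_Icc] at hk
    simp only [hh']
    rw [if_pos hk.2]
  have step4 : ∑ k ∈ Icc (0:ℤ) (N:ℤ), h k =
      ∑ n ∈ range (N + 1), (X : R) ^ (n ^ 2) * (∏ j ∈ range n, (1 - (X : R) ^ (j + 1)))⁻¹ := by
    rw [← sum_Icc_toNat (fun n => (X : R) ^ (n ^ 2) * (∏ j ∈ range n, (1 - (X : R) ^ (j + 1)))⁻¹) N]
    apply Finset.sum_congr rfl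
    intro k hk
    rw [Finset.mem_Icc] at hk
    show xe (k ^ 2) * (E 1 k.toNat)⁻¹ = _
    rw [E_one, show xe (k ^ 2) = (X : R) ^ (k.toNat ^ 2) by
      unfold xe
      congr 1
      have hcast : k ^ 2 = ((k.toNat ^ 2 : ℕ) : ℤ) := by
        push_cast [Int.toNat_of_nonneg hk.1]
        ring
      rw [hcast, Int.toNat_natCast]]
  rw [← step4, ← step3]
  exact md_trans step1 step2

def Pent (m : ℕ) : R := ∑ j ∈ Icc (-(m:ℤ)) (m:ℤ), s j • xe (EZ j)

lemma smul_pull (c : ℚ) (x y : R) : c • (x * y) = (c • x) * y := (smul_mul_assoc c x y).symm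

/-- Schur side limit -/
lemma lemB (N : ℕ) : md (N + 1) (Ssum ((15 * (N + 1) : ℕ) : ℤ))
    (Pent (15 * (N + 1)) * (E 1 (5 * (N + 1)))⁻¹) := by
  set m : ℕ := 15 * (N + 1) with hm
  have key : ∀ j ∈ Icc (-(m:ℤ)) (m:ℤ),
      md (N + 1) (tS (m:ℤ) j) (s j • (xe (EZ j) * (E 1 (5 * (N + 1)))⁻¹)) := by
    intro j hj
    rw [Finset.mem_Icc] at hj
    rcases le_or_gt (EZ j) (N : ℤ) with hE | hE
    · have hj2 : j ^ 2 ≤ (N : ℤ) := by linarith [EZ_sq j]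
      obtain ⟨hjl, hjr⟩ := sq_le_bound hj2
      have hgb : gbz 1 (m:ℤ) (kk (m:ℤ) j) = gb 1 ((m:ℤ)).toNat (kk (m:ℤ) j).toNat :=
        gbz_eq_gb (by positivity) (by unfold kk; omega)
      have h1 : md (N + 1) (gb 1 ((m:ℤ)).toNat (kk (m:ℤ) j).toNat)
          ((E 1 (kk (m:ℤ) j).toNat)⁻¹) := by
        apply md_mono _ (md_gb le_rfl (show (kk (m:ℤ) j).toNat ≤ ((m:ℤ)).toNat by
          unfold kk; omega))
        unfold kk
        omega
      have h2 : md (N + 1) ((E 1 (kk (m:ℤ) j).toNat)⁻¹) ((E 1 (5 * (N + 1)))⁻¹) := by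
        apply md_mono _ (md_E_inv le_rfl (show 5 * (N + 1) ≤ (kk (m:ℤ) j).toNat by
          unfold kk; omega))
        omega
      show md (N + 1) (s j • (xe (EZ j) * gbz 1 (m:ℤ) (kk (m:ℤ) j))) _
      rw [hgb]
      exact md_smul _ (md_mul md_refl (md_trans h1 h2))
    · have hE' : ((N + 1 : ℕ) : ℤ) ≤ EZ j := by push_cast; omega
      have z1 : md (N + 1) (tS (m:ℤ) j) 0 := by
        show md (N + 1) (s j • (xe (EZ j) * gbz 1 (m:ℤ) (kk (m:ℤ) j))) 0
        exact md_smul_zero _ (md_xe hE')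
      have z2 : md (N + 1) (s j • (xe (EZ j) * (E 1 (5 * (N + 1)))⁻¹)) 0 :=
        md_smul_zero _ (md_xe hE')
      exact md_trans z1 (md_symm z2)
  have hmd := md_sum key
  have hps : ∑ j ∈ Icc (-(m:ℤ)) (m:ℤ), s j • (xe (EZ j) * (E 1 (5 * (N + 1)))⁻¹) =
      Pent m * (E 1 (5 * (N + 1)))⁻¹ := by
    unfold Pent
    rw [Finset.sum_mul]
    apply Finset.sum_congr rfl
    intro j _
    exact smul_pull _ _ _
  rw [← hps]
  exact hmd

/-- Jacobi triple product side limit -/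
lemma lemC (N : ℕ) : md (N + 1) (QQ (15 * (N + 1)))
    (Pent (15 * (N + 1)) * (E 5 (N + 1))⁻¹) := by
  set m : ℕ := 15 * (N + 1) with hm
  have hQ : QQ m = Fjt (m:ℤ) (m:ℤ) := (Fjt_eq m).symm
  have key : ∀ j ∈ Icc (-(m:ℤ)) (m:ℤ),
      md (N + 1) (s j • (xe (EZ j) * gbz 5 ((m:ℤ) + (m:ℤ)) ((m:ℤ) + j)))
        (s j • (xe (EZ j) * (E 5 (N + 1))⁻¹)) := by
    intro j hj
    rw [Finset.mem_Icc] at hj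
    rcases le_or_gt (EZ j) (N : ℤ) with hE | hE
    · have hj2 : j ^ 2 ≤ (N : ℤ) := by linarith [EZ_sq j]
      obtain ⟨hjl, hjr⟩ := sq_le_bound hj2
      have hgb : gbz 5 ((m:ℤ) + (m:ℤ)) ((m:ℤ) + j) =
          gb 5 ((m:ℤ) + (m:ℤ)).toNat ((m:ℤ) + j).toNat :=
        gbz_eq_gb (by positivity) (by omega)
      have h1 : md (N + 1) (gb 5 ((m:ℤ) + (m:ℤ)).toNat ((m:ℤ) + j).toNat)
          ((E 5 ((m:ℤ) + j).toNat)⁻¹) := by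
        apply md_mono _ (md_gb (by norm_num) (show ((m:ℤ) + j).toNat ≤ ((m:ℤ) + (m:ℤ)).toNat
          by omega))
        omega
      have h2 : md (N + 1) ((E 5 ((m:ℤ) + j).toNat)⁻¹) ((E 5 (N + 1))⁻¹) := by
        apply md_mono _ (md_E_inv (by norm_num) (show N + 1 ≤ ((m:ℤ) + j).toNat by omega))
        omega
      rw [hgb]
      exact md_smul _ (md_mul md_refl (md_trans h1 h2))
    · have hE' : ((N + 1 : ℕ) : ℤ) ≤ EZ j := by push_cast; omega
      exact md_trans (md_smul_zero _ (md_xe hE')) (md_symm (md_smul_zero _ (md_xe hE')))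
  have hmd := md_sum key
  have hps : ∑ j ∈ Icc (-(m:ℤ)) (m:ℤ), s j • (xe (EZ j) * (E 5 (N + 1))⁻¹) =
      Pent m * (E 5 (N + 1))⁻¹ := by
    unfold Pent
    rw [Finset.sum_mul]
    apply Finset.sum_congr rfl
    intro j _
    exact smul_pull _ _ _
  rw [hQ]
  show md (N + 1) (∑ j ∈ Icc (-(m:ℤ)) (m:ℤ),
    s j • (xe (EZ j) * gbz 5 ((m:ℤ) + (m:ℤ)) ((m:ℤ) + j))) _
  rw [← hps]
  exact hmd

end

end RR

open RR

/-- The Rogers–Ramanujan identity, as an identity of formal power series over `ℚ`,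
stated coefficient-wise: for every `N`, the `N`-th coefficient of
`∏_{k≥1} ((1-q^{5k-4})(1-q^{5k-1}))⁻¹` (truncated at the first `N+1` factors, which
determines all coefficients up to degree `N`) equals the `N`-th coefficient of
`Σ_{n≥0} q^{n²}/((1-q)···(1-q^n))` (likewise truncated). -/
theorem stmt8 (N : ℕ) :
    PowerSeries.coeff (R := ℚ) N
        (∏ k ∈ range (N + 1),
          ((1 - (X : PowerSeries ℚ) ^ (5 * (k + 1) - 4)) *
            (1 - (X : PowerSeries ℚ) ^ (5 * (k + 1) - 1)))⁻¹)
      = PowerSeries.coeff (R := ℚ) N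
        (∑ n ∈ range (N + 1),
          (X : PowerSeries ℚ) ^ (n ^ 2) *
            (∏ j ∈ range n, (1 - (X : PowerSeries ℚ) ^ (j + 1)))⁻¹) := by
  have hL : (∏ k ∈ range (N + 1),
      ((1 - (X : PowerSeries ℚ) ^ (5 * (k + 1) - 4)) *
        (1 - (X : PowerSeries ℚ) ^ (5 * (k + 1) - 1)))⁻¹) = (PP (N + 1))⁻¹ := by
    have h1 : ∀ k ∈ range (N + 1),
        ((1 - (X : PowerSeries ℚ) ^ (5 * (k + 1) - 4)) *
          (1 - (X : PowerSeries ℚ) ^ (5 * (k + 1) - 1)))⁻¹ =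
        ((1 - (X : PowerSeries ℚ) ^ (5 * k + 1)) *
          (1 - (X : PowerSeries ℚ) ^ (5 * k + 4)))⁻¹ := by
      intro k _
      rw [show 5 * (k + 1) - 4 = 5 * k + 1 by omega, show 5 * (k + 1) - 1 = 5 * k + 4 by omega]
    rw [Finset.prod_congr rfl h1]
    unfold PP
    exact (prod_inv _ _).symm
  have c1 := lemB N
  have c2 := lemC N
  have c3 : md (N + 1) (QQ (15 * (N + 1))) (QQ (N + 1)) := QQ_tail (by omega) (by omega)
  have hinv : (E 1 (5 * (N + 1)))⁻¹ =
      (E 5 (N + 1))⁻¹ * ((QQ (N + 1))⁻¹ * (PP (N + 1))⁻¹) := by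
    rw [euler_split (N + 1), PowerSeries.mul_inv_rev, PowerSeries.mul_inv_rev]
  have c4 : md (N + 1) (Pent (15 * (N + 1)) * (E 1 (5 * (N + 1)))⁻¹)
      (QQ (N + 1) * ((QQ (N + 1))⁻¹ * (PP (N + 1))⁻¹)) := by
    rw [hinv, ← mul_assoc]
    exact md_mul (md_trans (md_symm c2) c3) md_refl
  have hcancel : QQ (N + 1) * ((QQ (N + 1))⁻¹ * (PP (N + 1))⁻¹) = (PP (N + 1))⁻¹ := by
    rw [← mul_assoc, PowerSeries.mul_inv_cancel _ (by rw [QQ_constC]; norm_num), one_mul]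
  have c5 : md (N + 1) (Ssum ((15 * (N + 1) : ℕ) : ℤ)) ((PP (N + 1))⁻¹) := by
    apply md_trans c1
    rw [← hcancel]
    exact c4
  have c6 := lemA N
  have c7 : md (N + 1) ((PP (N + 1))⁻¹)
      (∑ n ∈ range (N + 1), (X : PowerSeries ℚ) ^ (n ^ 2) *
        (∏ j ∈ range n, (1 - (X : PowerSeries ℚ) ^ (j + 1)))⁻¹) := by
    apply md_trans (md_symm c5)
    rw [S_eq_RS (15 * (N + 1))]
    exact c6
  rw [hL]
  exact md_coeff c7 (by omega)
end

section
/- For every non-negative integer k, the product (q;q)_k divides (q^{k+1};q)_{k+1}/(1-q) in ℤ[q]. -/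
open Polynomial Finset

lemma aux11 : ∀ N n m : ℕ, n + m ≤ N →
    (∏ j ∈ range m, ((X : ℤ[X]) ^ (j + 1) - 1)) ∣
      ∏ j ∈ range m, ((X : ℤ[X]) ^ (n + j + 1) - 1) := by
  intro N
  induction N with
  | zero =>
    intro n m h
    have hm : m = 0 := by omega
    simp [hm]
  | succ N ih =>
    intro n m h
    match n, m with
    | 0, m => simp
    | n, 0 => simp
    | n + 1, m + 1 =>
      have hA : ∏ j ∈ range m, ((X : ℤ[X]) ^ (n + 1 + (j + 1) + 1) - 1)
          = ∏ j ∈ range m, ((X : ℤ[X]) ^ (n + 1 + 1 + j + 1) - 1) :=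
        prod_congr rfl fun j _ => by rw [show n + 1 + (j + 1) + 1 = n + 1 + 1 + j + 1 by omega]
      have key : (∏ j ∈ range (m + 1), ((X : ℤ[X]) ^ (n + 1 + j + 1) - 1))
          = (X : ℤ[X]) ^ (n + 1) *
              ((X ^ (m + 1) - 1) * ∏ j ∈ range m, ((X : ℤ[X]) ^ (n + 1 + j + 1) - 1))
            + ∏ j ∈ range (m + 1), ((X : ℤ[X]) ^ (n + j + 1) - 1) := by
        rw [prod_range_succ, prod_range_succ' (fun j => (X : ℤ[X]) ^ (n + j + 1) - 1) m]
        have h2 : ∏ j ∈ range m, ((X : ℤ[X]) ^ (n + (j + 1) + 1) - 1)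
            = ∏ j ∈ range m, ((X : ℤ[X]) ^ (n + 1 + j + 1) - 1) :=
          prod_congr rfl fun j _ => by rw [show n + (j + 1) + 1 = n + 1 + j + 1 by omega]
        rw [h2]
        ring
      rw [key]
      apply dvd_add
      · obtain ⟨c, hc⟩ := ih (n + 1) m (by omega)
        refine ⟨X ^ (n + 1) * c, ?_⟩
        rw [prod_range_succ, hc]
        ring
      · exact ih n (m + 1) (by omega)

/-- `(q;q)_k` divides `(q^{k+1};q)_{k+1}/(1-q)` in `ℤ[q]`; equivalently,
`(1-q)·(q;q)_k` divides `(q^{k+1};q)_{k+1} = ∏_{j=0}^{k}(1-q^{k+1+j})`. -/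
theorem stmt11 (k : ℕ) :
    (1 - X) * ∏ j ∈ range k, (1 - X ^ (j + 1)) ∣
      ∏ j ∈ range (k + 1), (1 - (X : ℤ[X]) ^ (k + 1 + j)) := by
  have sign : ∀ (m : ℕ) (e : ℕ → ℕ),
      ∏ j ∈ range m, ((1 : ℤ[X]) - X ^ e j) = (-1) ^ m * ∏ j ∈ range m, ((X : ℤ[X]) ^ e j - 1) := by
    intro m e
    calc ∏ j ∈ range m, ((1 : ℤ[X]) - X ^ e j)
        = ∏ j ∈ range m, ((-1) * ((X : ℤ[X]) ^ e j - 1)) := prod_congr rfl fun j _ => by ring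
      _ = (∏ _j ∈ range m, (-1 : ℤ[X])) * ∏ j ∈ range m, ((X : ℤ[X]) ^ e j - 1) :=
          prod_mul_distrib
      _ = (-1) ^ m * ∏ j ∈ range m, ((X : ℤ[X]) ^ e j - 1) := by rw [prod_const, card_range]
  have h1 : ((1 : ℤ[X]) - X) * ∏ j ∈ range k, (1 - X ^ (j + 1)) ∣
      ∏ j ∈ range (k + 1), ((1 : ℤ[X]) - X ^ (j + 1)) := by
    rw [prod_range_succ]
    have hdvd : (1 - (X : ℤ[X])) ∣ (1 - X ^ (k + 1)) := by
      have h := sub_dvd_pow_sub_pow (X : ℤ[X]) 1 (k + 1)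
      rw [one_pow] at h
      rw [show (1 : ℤ[X]) - X = -(X - 1) by ring,
        show (1 : ℤ[X]) - X ^ (k + 1) = -(X ^ (k + 1) - 1) by ring, neg_dvd, dvd_neg]
      exact h
    rw [mul_comm (∏ j ∈ range k, ((1 : ℤ[X]) - X ^ (j + 1)))]
    exact mul_dvd_mul hdvd dvd_rfl
  have h2 : ∏ j ∈ range (k + 1), ((1 : ℤ[X]) - X ^ (j + 1)) ∣
      ∏ j ∈ range (k + 1), (1 - (X : ℤ[X]) ^ (k + 1 + j)) := by
    rw [sign (k + 1) (fun j => j + 1), sign (k + 1) (fun j => k + 1 + j)]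
    apply mul_dvd_mul_left
    have h := aux11 (k + (k + 1)) k (k + 1) le_rfl
    have hB : ∏ j ∈ range (k + 1), ((X : ℤ[X]) ^ (k + 1 + j) - 1)
        = ∏ j ∈ range (k + 1), ((X : ℤ[X]) ^ (k + j + 1) - 1) :=
      prod_congr rfl fun j _ => by rw [show k + 1 + j = k + j + 1 by omega]
    rw [hB]
    exact h
  exact h1.trans h2
end

section
/- The Habiro ring ẑ[q] := lim_← ℤ[q]/((q;q)_k) is isomorphic to the cyclotomic completion ℤ[q]^ℕ := lim_← ℤ[q]/(f(q)), the limit taken over the multiplicative set generated by all cyclotomic polynomials Φ_n(q), n ∈ ℕ, directed by divisibility. -/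
open Polynomial Finset

set_option synthInstance.maxHeartbeats 1000000
set_option maxHeartbeats 1000000

/-- `(q;q)_k = ∏_{j=1}^k (1 - q^j)` in `ℤ[q]`. -/
noncomputable def qPoch (k : ℕ) : Polynomial ℤ :=
  ∏ j ∈ range k, (1 - X ^ (j + 1))

/-- The Habiro ring `lim_← ℤ[q]/((q;q)_k)`, realized as the subring of compatible
families in `Π_k ℤ[q]/((q;q)_k)`. -/
noncomputable def habiroRing : Subring (Π k : ℕ, Polynomial ℤ ⧸ Ideal.span {qPoch k}) where
  carrier := {x | ∀ (k k' : ℕ) (h : k ≤ k'),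
      Ideal.Quotient.factor
        (Ideal.span_singleton_le_span_singleton.mpr
          (Finset.prod_dvd_prod_of_subset _ _ _ (Finset.range_subset_range.mpr h)))
        (x k') = x k}
  mul_mem' := by
    intro a b ha hb k k' h
    rw [Pi.mul_apply, Pi.mul_apply, RingHom.map_mul, ha k k' h, hb k k' h]
    rfl
  one_mem' := by
    intro k k' h
    rw [Pi.one_apply, Pi.one_apply, RingHom.map_one]
    rfl
  add_mem' := by
    intro a b ha hb k k' h
    rw [Pi.add_apply, Pi.add_apply, RingHom.map_add, ha k k' h, hb k k' h]
    rfl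
  zero_mem' := by
    intro k k' h
    rw [Pi.zero_apply, Pi.zero_apply, RingHom.map_zero]
    rfl
  neg_mem' := by
    intro a ha k k' h
    rw [Pi.neg_apply, Pi.neg_apply, RingHom.map_neg, ha k k' h]
    rfl

/-- The multiplicative set `Φ*_S ⊆ R[q]` generated by cyclotomic polynomials
`Φ_n`, `n ∈ S`. -/
noncomputable def cycMonoid (R : Type*) [CommRing R] (S : Set ℕ) : Submonoid (Polynomial R) :=
  Submonoid.closure {f | ∃ n ∈ S, f = cyclotomic n R}

/-- The `S`-cyclotomic completion `R[q]^S = lim_← R[q]/(f)`, `f ∈ Φ*_S`. -/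
noncomputable def cycCompletion (R : Type*) [CommRing R] (S : Set ℕ) :
    Subring (Π f : cycMonoid R S, Polynomial R ⧸ Ideal.span {(f : Polynomial R)}) where
  carrier := {x | ∀ (f g : cycMonoid R S) (h : (f : Polynomial R) ∣ (g : Polynomial R)),
      Ideal.Quotient.factor (Ideal.span_singleton_le_span_singleton.mpr h) (x g) = x f}
  mul_mem' := by
    intro a b ha hb f g h
    rw [Pi.mul_apply, Pi.mul_apply, RingHom.map_mul, ha f g h, hb f g h]
  one_mem' := by
    intro f g h
    rw [Pi.one_apply, Pi.one_apply, RingHom.map_one]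
  add_mem' := by
    intro a b ha hb f g h
    rw [Pi.add_apply, Pi.add_apply, RingHom.map_add, ha f g h, hb f g h]
  zero_mem' := by
    intro f g h
    rw [Pi.zero_apply, Pi.zero_apply, RingHom.map_zero]
  neg_mem' := by
    intro a ha f g h
    rw [Pi.neg_apply, Pi.neg_apply, RingHom.map_neg, ha f g h]

/-! ### Auxiliary material for the proof -/

/-- `∏_{j=1}^k (X^j - 1)`, an "honest" product of cyclotomic polynomials associated
to `qPoch k`. -/
noncomputable def Ppoly (k : ℕ) : Polynomial ℤ := ∏ j ∈ range k, (X ^ (j + 1) - 1)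

lemma qPoch_eq (k : ℕ) : qPoch k = (-1) ^ k * Ppoly k :=
  calc qPoch k
      = ∏ j ∈ range k, ((-1) * (X ^ (j + 1) - 1) : Polynomial ℤ) :=
        Finset.prod_congr rfl fun j _ => by ring
    _ = (∏ _j ∈ range k, (-1 : Polynomial ℤ)) * Ppoly k := Finset.prod_mul_distrib
    _ = (-1) ^ k * Ppoly k := by rw [Finset.prod_const, card_range]

lemma neg_one_pow_mul_self (k : ℕ) : ((-1 : Polynomial ℤ)) ^ k * (-1) ^ k = 1 := by
  rw [← pow_add, ← two_mul, pow_mul]; norm_num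

lemma Ppoly_dvd_qPoch (k : ℕ) : Ppoly k ∣ qPoch k :=
  ⟨(-1) ^ k, by rw [qPoch_eq]; ring⟩

lemma qPoch_dvd_Ppoly (k : ℕ) : qPoch k ∣ Ppoly k :=
  ⟨(-1) ^ k, by rw [qPoch_eq, mul_comm ((-1 : Polynomial ℤ) ^ k), mul_assoc,
      neg_one_pow_mul_self, mul_one]⟩

lemma qPoch_dvd {k k' : ℕ} (h : k ≤ k') : qPoch k ∣ qPoch k' :=
  Finset.prod_dvd_prod_of_subset _ _ _ (Finset.range_subset_range.mpr h)

lemma X_pow_sub_one_dvd {n m : ℕ} (h : n ∣ m) : (X ^ n - 1 : Polynomial ℤ) ∣ X ^ m - 1 := by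
  obtain ⟨c, rfl⟩ := h
  rw [pow_mul]
  simpa using sub_dvd_pow_sub_pow (X ^ n : Polynomial ℤ) 1 c

lemma Ppoly_mem (k : ℕ) : Ppoly k ∈ cycMonoid ℤ (Set.univ : Set ℕ) := by
  rw [Ppoly]
  refine prod_mem fun j _ => ?_
  rw [← prod_cyclotomic_eq_X_pow_sub_one (Nat.succ_pos j) ℤ]
  exact prod_mem fun d _ => Submonoid.subset_closure ⟨d, Set.mem_univ d, rfl⟩

lemma cyclotomic_dvd_Ico {n k : ℕ} (hn : 0 < n) :
    cyclotomic n ℤ ∣ ∏ j ∈ Ico k (k + n), (X ^ (j + 1) - 1 : Polynomial ℤ) := by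
  have hpos : 0 < (k / n + 1) * n := Nat.mul_pos (Nat.succ_pos _) hn
  set j0 := (k / n + 1) * n - 1 with hj0def
  have hj1 : j0 + 1 = (k / n + 1) * n := by omega
  have hlow : k < (k / n + 1) * n := by
    rw [add_mul, one_mul, mul_comm]
    have h1 := Nat.div_add_mod k n
    have h2 := Nat.mod_lt k hn
    omega
  have hhigh : (k / n + 1) * n ≤ k + n := by
    rw [add_mul, one_mul]
    have := Nat.div_mul_le_self k n
    omega
  have hmem : j0 ∈ Ico k (k + n) := Finset.mem_Ico.mpr ⟨by omega, by omega⟩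
  refine dvd_trans ?_ (Finset.dvd_prod_of_mem _ hmem)
  refine (cyclotomic.dvd_X_pow_sub_one n ℤ).trans (X_pow_sub_one_dvd ?_)
  rw [hj1]
  exact Dvd.intro_left _ rfl

lemma multiset_dvd (l : Multiset (Polynomial ℤ)) :
    (∀ y ∈ l, ∃ n, y = cyclotomic n ℤ) → ∃ k, l.prod ∣ Ppoly k := by
  induction l using Multiset.induction_on with
  | empty => exact fun _ => ⟨0, by simp⟩
  | cons a l ih =>
    intro hl
    obtain ⟨k, hk⟩ := ih fun y hy => hl y (Multiset.mem_cons_of_mem hy)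
    obtain ⟨n, rfl⟩ := hl a (Multiset.mem_cons_self a l)
    rcases Nat.eq_zero_or_pos n with rfl | hn
    · refine ⟨k, ?_⟩
      rw [Multiset.prod_cons, cyclotomic_zero, one_mul]
      exact hk
    · refine ⟨k + n, ?_⟩
      have hsplit : Ppoly (k + n)
          = Ppoly k * ∏ j ∈ Ico k (k + n), (X ^ (j + 1) - 1 : Polynomial ℤ) := by
        rw [Ppoly, Ppoly, ← Finset.prod_range_mul_prod_Ico _ (Nat.le_add_right k n)]
      rw [Multiset.prod_cons, hsplit, mul_comm (Ppoly k)]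
      exact mul_dvd_mul (cyclotomic_dvd_Ico hn) hk

lemma exists_dvd_Ppoly {f : Polynomial ℤ} (hf : f ∈ cycMonoid ℤ (Set.univ : Set ℕ)) :
    ∃ k, f ∣ Ppoly k := by
  obtain ⟨l, hl, rfl⟩ := Submonoid.exists_multiset_of_mem_closure hf
  exact multiset_dvd l fun y hy => by
    obtain ⟨n, -, rfl⟩ := hl y hy
    exact ⟨n, rfl⟩

/-- The canonical map between quotients by principal ideals induced by divisibility. -/
noncomputable def fac {a b : Polynomial ℤ} (h : a ∣ b) :
    (Polynomial ℤ ⧸ Ideal.span {b}) →+* Polynomial ℤ ⧸ Ideal.span {a} :=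
  Ideal.Quotient.factor (Ideal.span_singleton_le_span_singleton.mpr h)

lemma fac_fac {a b c : Polynomial ℤ} (h1 : a ∣ b) (h2 : b ∣ c)
    (x : Polynomial ℤ ⧸ Ideal.span {c}) : fac h1 (fac h2 x) = fac (h1.trans h2) x := by
  obtain ⟨y, rfl⟩ := Ideal.Quotient.mk_surjective x
  simp only [fac, Ideal.Quotient.factor_mk]

lemma fac_refl {a : Polynomial ℤ} (x : Polynomial ℤ ⧸ Ideal.span {a}) :
    fac (dvd_refl a) x = x := by
  obtain ⟨y, rfl⟩ := Ideal.Quotient.mk_surjective x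
  simp only [fac, Ideal.Quotient.factor_mk]

lemma habiro_key {x : Π k : ℕ, Polynomial ℤ ⧸ Ideal.span {qPoch k}} (hx : x ∈ habiroRing)
    {f : Polynomial ℤ} {k k' : ℕ} (h : f ∣ qPoch k) (h' : f ∣ qPoch k') :
    fac h (x k) = fac h' (x k') := by
  rcases le_total k k' with hkk | hkk
  · have hcomp : fac (qPoch_dvd hkk) (x k') = x k := hx k k' hkk
    rw [← hcomp, fac_fac]
  · have hcomp : fac (qPoch_dvd hkk) (x k) = x k' := hx k' k hkk
    rw [← hcomp, fac_fac]

lemma cyc_key {y : Π f : cycMonoid ℤ (Set.univ : Set ℕ),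
      Polynomial ℤ ⧸ Ideal.span {(f : Polynomial ℤ)}}
    (hy : y ∈ cycCompletion ℤ (Set.univ : Set ℕ))
    {f : Polynomial ℤ} (g g' : cycMonoid ℤ (Set.univ : Set ℕ))
    (h : f ∣ (g : Polynomial ℤ)) (h' : f ∣ (g' : Polynomial ℤ)) :
    fac h (y g) = fac h' (y g') := by
  have hg : (g : Polynomial ℤ) ∣ ((g * g' : cycMonoid ℤ (Set.univ : Set ℕ)) : Polynomial ℤ) :=
    ⟨g', rfl⟩
  have hg' : (g' : Polynomial ℤ) ∣ ((g * g' : cycMonoid ℤ (Set.univ : Set ℕ)) : Polynomial ℤ) :=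
    ⟨g, mul_comm _ _⟩
  have e1 : fac hg (y (g * g')) = y g := hy g (g * g') hg
  have e2 : fac hg' (y (g * g')) = y g' := hy g' (g * g') hg'
  rw [← e1, ← e2, fac_fac, fac_fac]

noncomputable def PM (k : ℕ) : cycMonoid ℤ (Set.univ : Set ℕ) := ⟨Ppoly k, Ppoly_mem k⟩

noncomputable def Kf (f : cycMonoid ℤ (Set.univ : Set ℕ)) : ℕ := (exists_dvd_Ppoly f.2).choose

lemma Kf_spec (f : cycMonoid ℤ (Set.univ : Set ℕ)) : (f : Polynomial ℤ) ∣ Ppoly (Kf f) :=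
  (exists_dvd_Ppoly f.2).choose_spec

lemma Kf_spec' (f : cycMonoid ℤ (Set.univ : Set ℕ)) : (f : Polynomial ℤ) ∣ qPoch (Kf f) :=
  (Kf_spec f).trans (Ppoly_dvd_qPoch _)

noncomputable def toCyc (x : habiroRing) : cycCompletion ℤ (Set.univ : Set ℕ) :=
  ⟨fun f => fac (Kf_spec' f) (x.1 (Kf f)), by
    intro f g h
    show fac h (fac (Kf_spec' g) (x.1 (Kf g))) = fac (Kf_spec' f) (x.1 (Kf f))
    rw [fac_fac]
    exact habiro_key x.2 _ _⟩

noncomputable def toHab (y : cycCompletion ℤ (Set.univ : Set ℕ)) : habiroRing :=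
  ⟨fun k => fac (qPoch_dvd_Ppoly k) (y.1 (PM k)), by
    intro k k' h
    show fac (qPoch_dvd h) (fac (qPoch_dvd_Ppoly k') (y.1 (PM k')))
        = fac (qPoch_dvd_Ppoly k) (y.1 (PM k))
    refine (fac_fac _ _ _).trans ?_
    exact cyc_key y.2 (PM k') (PM k) _ _⟩

noncomputable def theEquiv : habiroRing ≃+* cycCompletion ℤ (Set.univ : Set ℕ) where
  toFun := toCyc
  invFun := toHab
  left_inv x := by
    refine Subtype.ext (funext fun k => ?_)
    show fac (qPoch_dvd_Ppoly k) (fac (Kf_spec' (PM k)) (x.1 (Kf (PM k)))) = x.1 k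
    exact (fac_fac (qPoch_dvd_Ppoly k) (Kf_spec' (PM k)) _).trans
      ((habiro_key x.2 _ (dvd_refl (qPoch k))).trans (fac_refl _))
  right_inv y := by
    refine Subtype.ext (funext fun f => ?_)
    show fac (Kf_spec' f) (fac (qPoch_dvd_Ppoly (Kf f)) (y.1 (PM (Kf f)))) = y.1 f
    exact (fac_fac (Kf_spec' f) (qPoch_dvd_Ppoly (Kf f)) _).trans
      ((cyc_key y.2 (PM (Kf f)) f ((Kf_spec' f).trans (qPoch_dvd_Ppoly _)) (dvd_refl _)).trans
        (fac_refl _))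
  map_mul' x y := Subtype.ext (funext fun f => map_mul (fac (Kf_spec' f)) _ _)
  map_add' x y := Subtype.ext (funext fun f => map_add (fac (Kf_spec' f)) _ _)

/-- The Habiro ring `lim_← ℤ[q]/((q;q)_k)` is isomorphic to the cyclotomic completion
`ℤ[q]^ℕ = lim_← ℤ[q]/(f)` over the multiplicative set generated by all cyclotomic
polynomials, since the family `{(q;q)_k}` is cofinal in that multiplicative set. -/
theorem stmt15 : Nonempty (habiroRing ≃+* cycCompletion ℤ (Set.univ : Set ℕ)) := by
  exact ⟨theEquiv⟩
end
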